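/- arXiv:1910.14521 — 5 statements merged into one kernel-verified Lean document; each statement's English description precedes it below -/
import Mathlib

section
/- For a Young diagram y with n blocks, at most d rows, k rows total, p distinct row lengths M_1 < ... < M_p, and l_q rows of length M_q, the number of strings in {1,...,d}^n whose multiset of value-multiplicities equals the row-length multiset of y is d! · n! / ((d-k)! · ∏_{q=1}^p (l_q! · (M_q!)^{l_q})). -/
open Finset Equiv

section permcount

variable {α β : Type*} [DecidableEq α] [Fintype α] [DecidableEq β] [Fintype β]

/-- Fiberwise equivalence induced by a permutation intertwining `f` and `g`. -/
def fiberEquivOfPerm (f g : α → β) (σ : Equiv.Perm α) (hσ : ∀ a, g (σ a) = f a) (b : β) :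
    {a // f a = b} ≃ {a // g a = b} where
  toFun a := ⟨σ a.1, by rw [hσ, a.2]⟩
  invFun a := ⟨σ.symm a.1, by
    have := hσ (σ.symm a.1)
    rw [Equiv.apply_symm_apply] at this
    rw [← this, a.2]⟩
  left_inv a := by simp
  right_inv a := by simp

lemma card_fiber_eq_of_perm (f g : α → β) (σ : Equiv.Perm α) (hσ : ∀ a, g (σ a) = f a) (b : β) :
    Fintype.card {a // f a = b} = Fintype.card {a // g a = b} :=
  Fintype.card_congr (fiberEquivOfPerm f g σ hσ b)

/-- The permutation glued from a family of fiberwise equivalences. -/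
def permOfFiberEquiv (f g : α → β) (F : ∀ b, {a // f a = b} ≃ {a // g a = b}) : Equiv.Perm α :=
  (Equiv.sigmaFiberEquiv f).symm.trans ((Equiv.sigmaCongrRight F).trans (Equiv.sigmaFiberEquiv g))

lemma permOfFiberEquiv_apply (f g : α → β) (F : ∀ b, {a // f a = b} ≃ {a // g a = b}) (a : α) :
    permOfFiberEquiv f g F a = (F (f a) ⟨a, rfl⟩).1 := by
  simp [permOfFiberEquiv, Equiv.sigmaFiberEquiv, Equiv.sigmaCongrRight]

lemma permOfFiberEquiv_spec (f g : α → β) (F : ∀ b, {a // f a = b} ≃ {a // g a = b}) (a : α) :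
    g (permOfFiberEquiv f g F a) = f a := by
  rw [permOfFiberEquiv_apply]
  exact (F (f a) ⟨a, rfl⟩).2

lemma card_perm_comp (f g : α → β)
    (h : ∀ b, Fintype.card {a // f a = b} = Fintype.card {a // g a = b}) :
    Fintype.card {σ : Equiv.Perm α // ∀ a, g (σ a) = f a}
      = ∏ b : β, (Fintype.card {a // f a = b}).factorial := by
  have hbij : Function.Bijective
      (fun F : ∀ b, ({a // f a = b} ≃ {a // g a = b}) =>
        (⟨permOfFiberEquiv f g F, permOfFiberEquiv_spec f g F⟩ :
          {σ : Equiv.Perm α // ∀ a, g (σ a) = f a})) := by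
    constructor
    · intro F F' hFF
      have hFF' : ∀ a, permOfFiberEquiv f g F a = permOfFiberEquiv f g F' a := by
        intro a
        exact congrFun (congrArg (fun σ : {σ : Equiv.Perm α // _} => (σ.1 : α → α)) hFF) a
      funext b
      apply Equiv.ext
      rintro ⟨a, rfl⟩
      have := hFF' a
      rw [permOfFiberEquiv_apply, permOfFiberEquiv_apply] at this
      exact Subtype.ext this
    · rintro ⟨σ, hσ⟩
      refine ⟨fiberEquivOfPerm f g σ hσ, ?_⟩
      apply Subtype.ext
      apply Equiv.ext
      intro a
      rw [permOfFiberEquiv_apply]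
      rfl
  rw [← Fintype.card_of_bijective hbij, Fintype.card_pi]
  refine Finset.prod_congr rfl fun b _ => ?_
  exact Fintype.card_equiv (Fintype.equivOfCardEq (h b))

lemma card_perm_comp_zero (f g : α → β)
    (h : ¬ ∀ b, Fintype.card {a // f a = b} = Fintype.card {a // g a = b}) :
    Fintype.card {σ : Equiv.Perm α // ∀ a, g (σ a) = f a} = 0 := by
  rw [Fintype.card_eq_zero_iff]
  constructor
  rintro ⟨σ, hσ⟩
  exact h (card_fiber_eq_of_perm f g σ hσ)

end permcount


section mult
variable {n d : ℕ}

/-- multiplicity of value `v` in the string `g`. -/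
def mult (g : Fin n → Fin d) (v : Fin d) : ℕ :=
  (Finset.univ.filter (fun i => g i = v)).card

lemma mult_eq_card (g : Fin n → Fin d) (v : Fin d) :
    mult g v = Fintype.card {i // g i = v} := (Fintype.card_subtype _).symm

lemma sum_mult (g : Fin n → Fin d) : ∑ v, mult g v = n := by
  have := Finset.card_eq_sum_card_fiberwise
    (f := g) (s := Finset.univ) (t := Finset.univ) (fun x _ => Finset.mem_univ _)
  simpa [mult] using this.symm

lemma mult_comp_perm (g : Fin n → Fin d) (π : Equiv.Perm (Fin n)) (v : Fin d) :
    mult (fun i => g (π i)) v = mult g v := by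
  rw [mult_eq_card, mult_eq_card]
  exact Fintype.card_congr (Equiv.subtypeEquiv π (fun i => Iff.rfl))

lemma mult_perm_comp (g : Fin n → Fin d) (σ : Equiv.Perm (Fin d)) (v : Fin d) :
    mult (fun i => σ (g i)) v = mult g (σ.symm v) := by
  rw [mult_eq_card, mult_eq_card]
  exact Fintype.card_congr (Equiv.subtypeEquiv (Equiv.refl _)
    (fun i => by simp [Equiv.apply_eq_iff_eq_symm_apply]))

end mult

section char
variable {n d k p : ℕ} {M l : Fin p → ℕ}

variable (M l) in
/-- the multiplicity-profile condition on a string. -/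
def Good (g : Fin n → Fin d) : Prop :=
  ∀ q, (Finset.univ.filter (fun v => mult g v = M q)).card = l q

variable (hM : StrictMono M) (hMpos : ∀ q, 0 < M q) (hlpos : ∀ q, 0 < l q)
  (hblocks : ∑ q, l q * M q = n) (hrows : ∑ q, l q = k) (hkd : k ≤ d)
  {g : Fin n → Fin d} (hg : Good M l g)

/-- the set of values with multiplicity among the `M q`. -/
private def Vset (g : Fin n → Fin d) (M : Fin p → ℕ) : Finset (Fin d) :=
  Finset.univ.biUnion (fun q => Finset.univ.filter (fun v => mult g v = M q))

include hM in
lemma Vset_disj : ∀ q ∈ (Finset.univ : Finset (Fin p)), ∀ q' ∈ Finset.univ, q ≠ q' →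
    Disjoint (Finset.univ.filter (fun v => mult g v = M q))
      (Finset.univ.filter (fun v => mult g v = M q')) := by
  intro q _ q' _ hqq'
  rw [Finset.disjoint_left]
  intro v hv hv'
  simp only [Finset.mem_filter] at hv hv'
  exact hqq' (hM.injective (hv.2 ▸ hv'.2))

include hM hrows hg in
lemma Vset_card : (Vset g M).card = k := by
  rw [Vset, Finset.card_biUnion (Vset_disj hM)]
  rw [← hrows]
  exact Finset.sum_congr rfl fun q _ => hg q

include hM hblocks hg in
lemma Vset_sum : ∑ v ∈ Vset g M, mult g v = n := by
  rw [Vset, Finset.sum_biUnion]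
  · have heq : ∀ q ∈ (Finset.univ : Finset (Fin p)),
        ∑ v ∈ Finset.univ.filter (fun v => mult g v = M q), mult g v = l q * M q := by
      intro q _
      have : ∀ v ∈ Finset.univ.filter (fun v => mult g v = M q), mult g v = M q :=
        fun v hv => (Finset.mem_filter.mp hv).2
      rw [Finset.sum_congr rfl this, Finset.sum_const, hg q, smul_eq_mul]
    rw [Finset.sum_congr rfl heq]
    exact hblocks
  · intro s hs t ht hst
    exact Vset_disj hM s (Finset.mem_univ _) t (Finset.mem_univ _) hst

include hM hblocks hg in
lemma mult_zero_of_notMem : ∀ v, v ∉ Vset g M → mult g v = 0 := by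
  intro v hv
  have hsub : Vset g M ⊆ Finset.univ := Finset.subset_univ _
  have hsd : ∑ x ∈ Finset.univ \ Vset g M, mult g x = 0 := by
    have := Finset.sum_sdiff (f := mult g) hsub
    rw [Vset_sum hM hblocks hg, sum_mult] at this
    omega
  exact Finset.sum_eq_zero_iff.mp hsd v (Finset.mem_sdiff.mpr ⟨Finset.mem_univ _, hv⟩)

include hMpos in
lemma mult_pos_of_mem : ∀ v ∈ Vset g M, mult g v ≠ 0 := by
  intro v hv
  simp only [Vset, Finset.mem_biUnion, Finset.mem_filter] at hv
  obtain ⟨q, _, hq⟩ := hv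
  rw [hq.2]
  exact (hMpos q).ne'

include hM hMpos hblocks hg in
lemma filter_mult_zero : Finset.univ.filter (fun v => mult g v = 0) = Finset.univ \ Vset g M := by
  ext v
  simp only [Finset.mem_filter, Finset.mem_sdiff, Finset.mem_univ, true_and]
  constructor
  · intro h hv
    exact mult_pos_of_mem hMpos v hv h
  · intro h
    exact mult_zero_of_notMem hM hblocks hg v h

include hM hMpos hblocks hrows hg in
lemma card_mult_zero : (Finset.univ.filter (fun v => mult g v = 0)).card = d - k := by
  rw [filter_mult_zero hM hMpos hblocks hg, Finset.card_sdiff_of_subset (Finset.subset_univ _),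
    Vset_card hM hrows hg]
  simp

include hM hMpos hblocks hg in
lemma card_mult_other (c : ℕ) (hc0 : c ≠ 0) (hcM : ∀ q, c ≠ M q) :
    (Finset.univ.filter (fun v => mult g v = c)).card = 0 := by
  rw [Finset.card_eq_zero]
  ext v
  simp only [Finset.mem_filter, Finset.mem_univ, true_and, Finset.notMem_empty, iff_false]
  intro h
  by_cases hv : v ∈ Vset g M
  · simp only [Vset, Finset.mem_biUnion, Finset.mem_filter] at hv
    obtain ⟨q, _, hq⟩ := hv
    exact hcM q (h ▸ hq.2)
  · exact hc0 (h ▸ mult_zero_of_notMem hM hblocks hg v hv)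

include hM hMpos hblocks hrows hg in
lemma card_image_of_good : (Finset.univ.image g).card = k := by
  have : Finset.univ.image g = Vset g M := by
    ext v
    simp only [Finset.mem_image, Finset.mem_univ, true_and]
    constructor
    · rintro ⟨i, rfl⟩
      by_contra hv
      have h0 := mult_zero_of_notMem hM hblocks hg _ hv
      have h0' : Finset.univ.filter (fun j => g j = g i) = ∅ := Finset.card_eq_zero.mp h0
      have : i ∈ Finset.univ.filter (fun j => g j = g i) := by simp
      rw [h0'] at this
      exact absurd this (Finset.notMem_empty i)
    · intro hv
      have hne := mult_pos_of_mem hMpos v hv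
      have hpos : 0 < (Finset.univ.filter (fun i => g i = v)).card := Nat.pos_of_ne_zero hne
      obtain ⟨i, hi⟩ := Finset.card_pos.mp hpos
      exact ⟨i, (Finset.mem_filter.mp hi).2⟩
  rw [this]
  exact Vset_card hM hrows hg

end char


def sigmaFstFiber {ι : Type*} (β : ι → Type*) (v : ι) :
    {x : Σ i, β i // x.1 = v} ≃ β v where
  toFun x := x.2 ▸ x.1.2
  invFun b := ⟨⟨v, b⟩, rfl⟩
  left_inv := by rintro ⟨⟨a, b⟩, rfl⟩; rfl
  right_inv b := rfl

section construct
variable {n d k p : ℕ} {M l : Fin p → ℕ}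
variable (hM : StrictMono M) (hMpos : ∀ q, 0 < M q) (hlpos : ∀ q, 0 < l q)
  (hblocks : ∑ q, l q * M q = n) (hrows : ∑ q, l q = k) (hkd : k ≤ d)

include hM hMpos hblocks hrows hkd in
lemma exists_good : ∃ f₀ : Fin n → Fin d,
    ∀ q, (Finset.univ.filter (fun v => mult f₀ v = M q)).card = l q := by
  classical
  have hcardk : Fintype.card (Σ q : Fin p, Fin (l q)) = Fintype.card (Fin k) := by
    simp [Fintype.card_sigma, hrows]
  let w : (Σ q : Fin p, Fin (l q)) ≃ Fin k := Fintype.equivOfCardEq hcardk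
  let c : Fin d → ℕ := fun v => if h : (v : ℕ) < k then M ((w.symm ⟨v, h⟩).1) else 0
  have hck : ∀ (j : Fin k), c (Fin.castLE hkd j) = M ((w.symm j).1) := by
    intro j
    have hj : ((Fin.castLE hkd j : Fin d) : ℕ) < k := j.2
    have hje : (⟨((Fin.castLE hkd j : Fin d) : ℕ), hj⟩ : Fin k) = j := Fin.ext rfl
    simp only [c, dif_pos hj, hje]
  have hsum : ∑ v : Fin d, c v = n := by
    have h1 : ∑ v : Fin d, c v = ∑ v ∈ Finset.univ.image (Fin.castLE hkd), c v := by
      refine (Finset.sum_subset (Finset.subset_univ _) ?_).symm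
      intro v _ hv
      have hnv : ¬ (v : ℕ) < k := by
        intro h
        exact hv (Finset.mem_image.mpr ⟨⟨(v : ℕ), h⟩, Finset.mem_univ _, Fin.ext rfl⟩)
      simp [c, hnv]
    have h2 : ∑ v ∈ Finset.univ.image (Fin.castLE hkd), c v
        = ∑ j : Fin k, c (Fin.castLE hkd j) :=
      Finset.sum_image (by intro x _ y _ h; exact Fin.castLE_injective hkd h)
    have h3 : ∑ j : Fin k, c (Fin.castLE hkd j) = ∑ x : Σ q : Fin p, Fin (l q), M x.1 := by
      rw [Finset.sum_congr rfl (fun j _ => hck j)]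
      exact Equiv.sum_comp w.symm (fun x => M x.1)
    have h4 : ∑ x : Σ q : Fin p, Fin (l q), M x.1 = n := by
      rw [← Finset.univ_sigma_univ, Finset.sum_sigma, ← hblocks]
      exact Finset.sum_congr rfl fun q _ => by
        simp [Finset.sum_const, mul_comm]
    omega
  have hcardn : Fintype.card (Σ v : Fin d, Fin (c v)) = Fintype.card (Fin n) := by
    simp [Fintype.card_sigma, hsum]
  let e2 : (Σ v : Fin d, Fin (c v)) ≃ Fin n := Fintype.equivOfCardEq hcardn
  refine ⟨fun i => (e2.symm i).1, ?_⟩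
  have hmult : ∀ v, mult (fun i => (e2.symm i).1) v = c v := by
    intro v
    rw [mult_eq_card]
    have e3 : {i : Fin n // (e2.symm i).1 = v} ≃ {x : Σ v : Fin d, Fin (c v) // x.1 = v} :=
      Equiv.subtypeEquiv e2.symm (fun i => Iff.rfl)
    rw [Fintype.card_congr e3, Fintype.card_congr (sigmaFstFiber _ v), Fintype.card_fin]
  intro q
  simp only [hmult]
  have hlt : ∀ v : Fin d, c v = M q → (v : ℕ) < k := by
    intro v hv
    by_contra h
    simp only [c, dif_neg h] at hv
    exact (hMpos q).ne' hv.symm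
  have e4 : {v : Fin d // c v = M q} ≃ {j : Fin k // M ((w.symm j).1) = M q} :=
    { toFun := fun v => ⟨⟨(v.1 : ℕ), hlt v.1 v.2⟩, by
        have hv := v.2
        simp only [c, dif_pos (hlt v.1 v.2)] at hv
        exact hv⟩
      invFun := fun j => ⟨Fin.castLE hkd j.1, by rw [hck j.1]; exact j.2⟩
      left_inv := fun v => Subtype.ext (Fin.ext rfl)
      right_inv := fun j => Subtype.ext (Fin.ext rfl) }
  have e5 : {j : Fin k // M ((w.symm j).1) = M q}
      ≃ {x : Σ q' : Fin p, Fin (l q') // M x.1 = M q} :=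
    Equiv.subtypeEquiv w.symm (fun j => Iff.rfl)
  have e6 : {x : Σ q' : Fin p, Fin (l q') // M x.1 = M q}
      ≃ {x : Σ q' : Fin p, Fin (l q') // x.1 = q} :=
    Equiv.subtypeEquiv (Equiv.refl _) (fun x => by simp [hM.injective.eq_iff])
  rw [← Fintype.card_subtype]
  rw [Fintype.card_congr (e4.trans (e5.trans e6)), Fintype.card_congr (sigmaFstFiber _ q),
    Fintype.card_fin]

end construct

lemma card_irrel {α : Type*} (i1 i2 : Fintype α) :
    @Fintype.card α i1 = @Fintype.card α i2 := by
  congr 1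
  exact Subsingleton.elim _ _

set_option maxHeartbeats 1000000 in
/-- For a Young diagram with `n` blocks, `k ≤ d` rows, `p` distinct row lengths
`M 0 < M 1 < ... < M (p-1)` (all positive), with `l q` rows of length `M q`
(so `∑ q, l q * M q = n` and `∑ q, l q = k`), the number of strings in
`{1,…,d}^n` whose multiset of value-multiplicities equals the multiset of row
lengths is `d! * n! / ((d-k)! * ∏ q, (l q)! * (M q)!^(l q))`, stated here in
product (denominator-cleared) form. -/
theorem young_diagram_string_count (n d k p : ℕ) (M l : Fin p → ℕ)
    (hM : StrictMono M) (hMpos : ∀ q, 0 < M q) (hlpos : ∀ q, 0 < l q)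
    (hblocks : ∑ q, l q * M q = n) (hrows : ∑ q, l q = k) (hkd : k ≤ d) :
    ((Finset.univ : Finset (Fin n → Fin d)).filter (fun f =>
        (Finset.univ.image f).card = k ∧
        ∀ q : Fin p,
          (Finset.univ.filter (fun v : Fin d =>
            (Finset.univ.filter (fun i => f i = v)).card = M q)).card = l q)).card
      * ((d - k).factorial * ∏ q, (l q).factorial * (M q).factorial ^ (l q))
      = d.factorial * n.factorial := by
  classical
  obtain ⟨f₀, hf₀⟩ := exists_good hM hMpos hblocks hrows hkd
  set A := (Finset.univ : Finset (Fin n → Fin d)).filter (fun f =>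
      (Finset.univ.image f).card = k ∧
      ∀ q : Fin p,
        (Finset.univ.filter (fun v : Fin d =>
          (Finset.univ.filter (fun i => f i = v)).card = M q)).card = l q) with hA
  have hf₀g : Good M l f₀ := hf₀
  -- multiplicity bounds and Fin (n+1)-valued profiles
  have multle : ∀ (h : Fin n → Fin d) (v : Fin d), mult h v ≤ n := by
    intro h v
    have := Finset.card_filter_le (Finset.univ : Finset (Fin n)) (fun i => h i = v)
    simpa [mult] using this
  let m' : (Fin n → Fin d) → Fin d → Fin (n + 1) :=
    fun h v => ⟨mult h v, Nat.lt_succ_of_le (multle h v)⟩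
  have Mle : ∀ q, M q ≤ n := by
    intro q
    have h1 : M q ≤ l q * M q := Nat.le_mul_of_pos_left (M q) (hlpos q)
    have h2 : l q * M q ≤ ∑ q, l q * M q :=
      Finset.single_le_sum (f := fun q => l q * M q) (fun _ _ => Nat.zero_le _)
        (Finset.mem_univ q)
    omega
  let MF : Fin p → Fin (n + 1) := fun q => ⟨M q, Nat.lt_succ_of_le (Mle q)⟩
  have MFinj : ∀ x ∈ (Finset.univ : Finset (Fin p)), ∀ y ∈ Finset.univ, MF x = MF y → x = y := by
    intro x _ y _ hxy
    exact hM.injective (congrArg Fin.val hxy)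
  have MFne0 : (0 : Fin (n + 1)) ∉ Finset.univ.image MF := by
    simp only [Finset.mem_image, not_exists]
    rintro q ⟨_, hq⟩
    exact (hMpos q).ne' (congrArg Fin.val hq)
  have m'fib : ∀ (h : Fin n → Fin d) (c : Fin (n + 1)),
      Fintype.card {v : Fin d // m' h v = c}
        = (Finset.univ.filter (fun v => mult h v = (c : ℕ))).card := by
    intro h c
    rw [← Fintype.card_subtype]
    exact Fintype.card_congr (Equiv.subtypeEquiv (Equiv.refl _)
      (fun v => by simp [m', Fin.ext_iff]))
  -- membership in A from the Good property
  have memA : ∀ g : Fin n → Fin d, Good M l g → g ∈ A := by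
    intro g hg
    rw [hA, Finset.mem_filter]
    exact ⟨Finset.mem_univ _, card_image_of_good hM hMpos hblocks hrows hg, hg⟩
  have goodA : ∀ g ∈ A, Good M l g := fun g hgA => (Finset.mem_filter.mp hgA).2.2
  -- the counting map
  let Φ : Equiv.Perm (Fin d) × Equiv.Perm (Fin n) → (Fin n → Fin d) :=
    fun pr => fun i => pr.1 (f₀ (pr.2 i))
  have goodPhi : ∀ pr : Equiv.Perm (Fin d) × Equiv.Perm (Fin n), Good M l (Φ pr) := by
    rintro ⟨σ, π⟩ q
    have h1 : ∀ v, mult (Φ (σ, π)) v = mult f₀ (σ.symm v) := by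
      intro v
      exact (mult_perm_comp (fun i => f₀ (π i)) σ v).trans (mult_comp_perm f₀ π (σ.symm v))
    simp only [h1]
    have hcc : Fintype.card {v : Fin d // mult f₀ (σ.symm v) = M q}
        = Fintype.card {v : Fin d // mult f₀ v = M q} :=
      Fintype.card_congr (Equiv.subtypeEquiv σ.symm (fun v => Iff.rfl))
    rw [← Fintype.card_subtype, hcc, Fintype.card_subtype]
    exact hf₀g q
  -- fiberwise counting
  have hPcard : (Finset.univ : Finset (Equiv.Perm (Fin d) × Equiv.Perm (Fin n))).card
      = ∑ g ∈ A, (Finset.univ.filter (fun pr => Φ pr = g)).card :=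
    Finset.card_eq_sum_card_fiberwise (fun pr _ => memA _ (goodPhi pr))
  -- the fiber over any g ∈ A has constant cardinality
  have fiber_card : ∀ g ∈ A, (Finset.univ.filter (fun pr => Φ pr = g)).card
      = ((d - k).factorial * ∏ q, (l q).factorial) * ∏ q, (M q).factorial ^ (l q) := by
    intro g hgA
    have hg : Good M l g := goodA g hgA
    -- fiber cardinalities of the multiplicity profiles of f₀ and g agree
    have fib_eq : ∀ c : ℕ, (Finset.univ.filter (fun v => mult f₀ v = c)).card
        = (Finset.univ.filter (fun v => mult g v = c)).card := by
      intro c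
      rcases Nat.eq_zero_or_pos c with rfl | hc
      · rw [card_mult_zero hM hMpos hblocks hrows hf₀g,
          card_mult_zero hM hMpos hblocks hrows hg]
      · by_cases hcM : ∃ q, c = M q
        · obtain ⟨q, rfl⟩ := hcM
          rw [hf₀g q, hg q]
        · push_neg at hcM
          rw [card_mult_other hM hMpos hblocks hf₀g c hc.ne' hcM,
            card_mult_other hM hMpos hblocks hg c hc.ne' hcM]
    -- per σ count of compatible π
    have step3 : ∀ σ : Equiv.Perm (Fin d),
        Fintype.card {π : Equiv.Perm (Fin n) // Φ (σ, π) = g}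
          = if (∀ v, mult g (σ v) = mult f₀ v) then ∏ v : Fin d, (mult g v).factorial
            else 0 := by
      intro σ
      have hfib : ∀ v : Fin d, Fintype.card {i : Fin n // σ (f₀ i) = v}
          = mult f₀ (σ.symm v) := by
        intro v
        rw [mult_eq_card]
        exact Fintype.card_congr (Equiv.subtypeEquiv (Equiv.refl _)
          (fun i => by simp [Equiv.apply_eq_iff_eq_symm_apply]))
      have hEq : Fintype.card {π : Equiv.Perm (Fin n) // Φ (σ, π) = g}
          = Fintype.card {π : Equiv.Perm (Fin n) //
              ∀ i, σ (f₀ (π i)) = g i} :=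
        Fintype.card_congr (Equiv.subtypeEquiv (Equiv.refl _)
          (fun π => by simp [Φ, funext_iff]))
      by_cases hcond : ∀ v, mult g (σ v) = mult f₀ v
      · rw [if_pos hcond, hEq]
        have hmatch : ∀ v, Fintype.card {i : Fin n // g i = v}
            = Fintype.card {i : Fin n // (fun j => σ (f₀ j)) i = v} := by
          intro v
          rw [hfib v, ← mult_eq_card]
          have := hcond (σ.symm v)
          rwa [Equiv.apply_symm_apply] at this
        have hc := card_perm_comp g (fun j => σ (f₀ j)) hmatch
        exact (card_irrel _ _).trans
          (hc.trans (Finset.prod_congr rfl fun v _ => by rw [← mult_eq_card]))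
      · rw [if_neg hcond, hEq]
        refine (card_irrel _ _).trans (card_perm_comp_zero g (fun j => σ (f₀ j)) ?_)
        intro hall
        apply hcond
        intro v
        have := hall (σ v)
        rw [hfib (σ v), Equiv.symm_apply_apply, ← mult_eq_card] at this
        exact this
    -- assemble the fiber count
    have hsplit : Fintype.card {pr : Equiv.Perm (Fin d) × Equiv.Perm (Fin n) // Φ pr = g}
        = ∑ σ : Equiv.Perm (Fin d), Fintype.card {π : Equiv.Perm (Fin n) // Φ (σ, π) = g} := by
      calc Fintype.card {pr : Equiv.Perm (Fin d) × Equiv.Perm (Fin n) // Φ pr = g}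
          = Fintype.card (Σ σ : Equiv.Perm (Fin d), {π : Equiv.Perm (Fin n) // Φ (σ, π) = g}) :=
            Fintype.card_congr (Equiv.subtypeProdEquivSigmaSubtype
              (fun (σ : Equiv.Perm (Fin d)) (π : Equiv.Perm (Fin n)) => Φ (σ, π) = g))
        _ = ∑ σ : Equiv.Perm (Fin d), Fintype.card {π : Equiv.Perm (Fin n) // Φ (σ, π) = g} :=
            Fintype.card_sigma
    have hcount : (Finset.univ.filter (fun pr => Φ pr = g)).card
        = (Finset.univ.filter
            (fun σ : Equiv.Perm (Fin d) => ∀ v, mult g (σ v) = mult f₀ v)).card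
          * ∏ v : Fin d, (mult g v).factorial := by
      rw [← Fintype.card_subtype, hsplit, Finset.sum_congr rfl (fun σ _ => step3 σ),
        ← Finset.sum_filter, Finset.sum_const, smul_eq_mul]
    rw [hcount]
    -- count the compatible value-permutations
    have hsigma : (Finset.univ.filter
          (fun σ : Equiv.Perm (Fin d) => ∀ v, mult g (σ v) = mult f₀ v)).card
        = (d - k).factorial * ∏ q, (l q).factorial := by
      rw [← Fintype.card_subtype]
      have e1 : {σ : Equiv.Perm (Fin d) // ∀ v, mult g (σ v) = mult f₀ v}
          ≃ {σ : Equiv.Perm (Fin d) // ∀ v, m' g (σ v) = m' f₀ v} :=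
        Equiv.subtypeEquiv (Equiv.refl _) (fun σ => by
          simp [m', Fin.ext_iff])
      rw [Fintype.card_congr e1]
      refine ((card_irrel _ _).trans (card_perm_comp (m' f₀) (m' g)
        (fun c => by rw [m'fib, m'fib]; exact fib_eq c))).trans ?_
      -- compute the product over Fin (n+1)
      have hfac : ∀ c : Fin (n + 1), (Fintype.card {v : Fin d // m' f₀ v = c}).factorial
          = ((Finset.univ.filter (fun v => mult f₀ v = (c : ℕ))).card).factorial := by
        intro c; rw [m'fib]
      simp only [hfac]
      rw [← Finset.prod_subset
        (Finset.subset_univ (insert (0 : Fin (n + 1)) (Finset.univ.image MF))) ?_]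
      · rw [Finset.prod_insert MFne0, Finset.prod_image MFinj]
        congr 1
        · rw [show (((0 : Fin (n + 1))) : ℕ) = 0 from rfl,
            card_mult_zero hM hMpos hblocks hrows hf₀g]
        · exact Finset.prod_congr rfl fun q _ => by
            rw [show ((MF q : Fin (n + 1)) : ℕ) = M q from rfl, hf₀g q]
      · intro c _ hc
        simp only [Finset.mem_insert, Finset.mem_image, not_or, not_exists] at hc
        have hc0 : (c : ℕ) ≠ 0 := by
          intro h
          exact hc.1 (Fin.ext h)
        have hcM : ∀ q, (c : ℕ) ≠ M q := by
          intro q h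
          exact hc.2 q ⟨Finset.mem_univ q, Fin.ext h.symm⟩
        rw [card_mult_other hM hMpos hblocks hf₀g _ hc0 hcM]
        rfl
    -- the product of factorials of the multiplicities of g
    have hprod : ∏ v : Fin d, (mult g v).factorial = ∏ q, (M q).factorial ^ (l q) := by
      rw [← Finset.prod_fiberwise_of_maps_to (g := fun v => m' g v) (t := Finset.univ)
        (fun v _ => Finset.mem_univ _) (fun v => (mult g v).factorial)]
      have hinner : ∀ c : Fin (n + 1),
          ∏ v ∈ Finset.univ.filter (fun v => m' g v = c), (mult g v).factorial
            = ((c : ℕ).factorial) ^ ((Finset.univ.filter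
                (fun v => mult g v = (c : ℕ))).card) := by
        intro c
        have hfeq : Finset.univ.filter (fun v : Fin d => m' g v = c)
            = Finset.univ.filter (fun v => mult g v = (c : ℕ)) := by
          ext v
          simp [m', Fin.ext_iff]
        rw [hfeq,
          Finset.prod_congr rfl (fun v hv => by rw [(Finset.mem_filter.mp hv).2]),
          Finset.prod_const]
      simp only [hinner]
      rw [← Finset.prod_subset (Finset.subset_univ (Finset.univ.image MF)) ?_]
      · rw [Finset.prod_image MFinj]
        exact Finset.prod_congr rfl fun q _ => by
          rw [show ((MF q : Fin (n + 1)) : ℕ) = M q from rfl, hg q]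
      · intro c _ hc
        by_cases hc0 : (c : ℕ) = 0
        · rw [hc0]
          simp
        · have hcM : ∀ q, (c : ℕ) ≠ M q := by
            intro q h
            exact hc (Finset.mem_image.mpr ⟨q, Finset.mem_univ q, Fin.ext h.symm⟩)
          rw [card_mult_other hM hMpos hblocks hg _ hc0 hcM, pow_zero]
    rw [hsigma, hprod]
  -- final assembly
  have htotal : (Finset.univ : Finset (Equiv.Perm (Fin d) × Equiv.Perm (Fin n))).card
      = d.factorial * n.factorial := by
    simp [Fintype.card_prod, Fintype.card_perm, Fintype.card_fin]
  rw [Finset.sum_congr rfl fiber_card, Finset.sum_const, smul_eq_mul] at hPcard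
  rw [htotal] at hPcard
  rw [show (d - k).factorial * ∏ q, (l q).factorial * (M q).factorial ^ (l q)
      = ((d - k).factorial * ∏ q, (l q).factorial) * ∏ q, (M q).factorial ^ (l q) by
    rw [Finset.prod_mul_distrib, ← mul_assoc]]
  exact hPcard.symm
end

section
/- For the rectangular Young-diagram state |y(k)⟩ with n particles on d sites, k rows of length n/k, with k < n/2, the single-particle reduced state is ρ_1 = I_d/d (maximally mixed). -/
open Finset

private lemma filter_cons_card {m d : ℕ} (a : Fin d) (r : Fin m → Fin d) (v : Fin d) :
    ((univ : Finset (Fin (m+1))).filter (fun x => (Fin.cons a r : Fin (m+1) → Fin d) x = v)).card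
      = (if a = v then 1 else 0) + ((univ : Finset (Fin m)).filter (fun x => r x = v)).card := by
  rw [Finset.card_filter, Finset.card_filter, Fin.sum_univ_succ]
  simp

private lemma P_perm_aux {n d k q : ℕ} (P : (Fin n → Fin d) → Prop)
    (hP : ∀ f : Fin n → Fin d, P f ↔ (univ.image f).card = k ∧
      ∀ v ∈ univ.image f, (univ.filter (fun i => f i = v)).card = q)
    (σ : Equiv.Perm (Fin d)) (f : Fin n → Fin d) (hf : P f) : P (σ ∘ f) := by
  rw [hP] at hf ⊢
  obtain ⟨h1, h2⟩ := hf
  have himg : univ.image (σ ∘ f) = (univ.image f).image σ := (Finset.image_image).symm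
  constructor
  · rw [himg, Finset.card_image_of_injective _ σ.injective]; exact h1
  · intro v hv
    have hv' : σ.symm v ∈ univ.image f := by
      rw [himg] at hv
      obtain ⟨w, hw, hwv⟩ := Finset.mem_image.mp hv
      simpa [← hwv] using hw
    have hfil : (univ.filter (fun i => (σ ∘ f) i = v)) = univ.filter (fun i => f i = σ.symm v) := by
      apply Finset.filter_congr
      intro x _
      constructor
      · intro h; simp [← h]
      · intro h; simp [Function.comp, h]
    rw [hfil]
    exact h2 _ hv'

private lemma P_perm {n d k q : ℕ} (P : (Fin n → Fin d) → Prop)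
    (hP : ∀ f : Fin n → Fin d, P f ↔ (univ.image f).card = k ∧
      ∀ v ∈ univ.image f, (univ.filter (fun i => f i = v)).card = q)
    (σ : Equiv.Perm (Fin d)) (f : Fin n → Fin d) : P (σ ∘ f) ↔ P f := by
  constructor
  · intro h
    have h2 := P_perm_aux P hP σ.symm _ h
    have he : ⇑σ.symm ∘ (⇑σ ∘ f) = f := by ext x; simp
    rwa [he] at h2
  · exact P_perm_aux P hP σ f

/-- For the rectangular Young-diagram state `|y(k)⟩` with `n = m + 1` particles on
`d` sites (the normalized equal superposition of all strings with exactly `k`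
distinct values, each occurring `n/k` times), with `k < n/2`, the one-party
reduced density matrix is the maximally mixed state `I_d / d`. -/
theorem rectangular_state_one_party_marginal (d k m : ℕ) (hk : 0 < k)
    (hdvd : k ∣ (m + 1)) (hkn : 2 * k < m + 1) (hkd : k ≤ d)
    (P : (Fin (m + 1) → Fin d) → Prop) [DecidablePred P]
    (hP : ∀ f, P f ↔
      (Finset.univ.image f).card = k ∧
      ∀ v ∈ Finset.univ.image f,
        (Finset.univ.filter (fun i => f i = v)).card = (m + 1) / k)
    (ψ : (Fin (m + 1) → Fin d) → ℂ)
    (hψ : ∀ f, ψ f = if P f then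
      ((Real.sqrt (((Finset.univ : Finset (Fin (m + 1) → Fin d)).filter
        (fun g => P g)).card))⁻¹ : ℝ) else 0) :
    ∀ i j : Fin d,
      (∑ r : Fin m → Fin d,
          ψ (Fin.cons i r) * (starRingEnd ℂ) (ψ (Fin.cons j r)))
        = if i = j then (1 / d : ℂ) else 0 := by
  intro i j
  obtain ⟨q, hnq⟩ := hdvd
  have hq3 : 3 ≤ q := by nlinarith
  have hq0 : 0 < q := by omega
  have hd0 : 0 < d := lt_of_lt_of_le hk hkd
  have hmq : (m + 1) / k = q := by rw [hnq, Nat.mul_div_cancel_left q hk]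
  rw [hmq] at hP
  by_cases hij : i = j
  · subst hij
    rw [if_pos rfl]
    -- fibers
    set A : Fin d → Finset (Fin (m+1) → Fin d) :=
      fun v => univ.filter (fun f => P f ∧ f 0 = v) with hA
    set N : ℕ := ((univ : Finset (Fin (m + 1) → Fin d)).filter (fun g => P g)).card with hNdef
    -- all fibers have equal cardinality
    have hA_eq : ∀ u v : Fin d, (A u).card = (A v).card := by
      intro u v
      apply Finset.card_bij' (fun f _ => (Equiv.swap u v) ∘ f) (fun f _ => (Equiv.swap u v) ∘ f)
      · intro f hf
        rw [hA, Finset.mem_filter] at hf ⊢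
        refine ⟨Finset.mem_univ _, P_perm_aux P hP _ f hf.2.1, ?_⟩
        simp [hf.2.2, Equiv.swap_apply_left]
      · intro f hf
        rw [hA, Finset.mem_filter] at hf ⊢
        refine ⟨Finset.mem_univ _, P_perm_aux P hP _ f hf.2.1, ?_⟩
        simp [hf.2.2, Equiv.swap_apply_right]
      · intro f _; ext x; simp [Equiv.swap_apply_self]
      · intro f _; ext x; simp [Equiv.swap_apply_self]
    -- N is the sum of fiber cardinalities
    have hsum : N = ∑ v : Fin d, (A v).card := by
      rw [hNdef]
      rw [Finset.card_eq_sum_card_fiberwise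
        (s := (univ : Finset (Fin (m + 1) → Fin d)).filter (fun g => P g))
        (t := univ) (f := fun f => f 0) (fun x _ => Finset.mem_univ _)]
      simp [hA, Finset.filter_filter]
    have hNd : N = d * (A i).card := by
      rw [hsum]
      rw [Finset.sum_congr rfl (fun v _ => hA_eq v i)]
      simp [Finset.card_univ, mul_comm]
    -- existence of a rectangular string
    have hPf0 : ∃ f0 : Fin (m+1) → Fin d, P f0 := by
      have hlt : ∀ x : Fin (m+1), x.val / q < k := fun x =>
        (Nat.div_lt_iff_lt_mul hq0).mpr (by rw [← hnq]; exact x.2)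
      set f0 : Fin (m+1) → Fin d := fun x => ⟨x.val / q, lt_of_lt_of_le (hlt x) hkd⟩ with hf0
      refine ⟨f0, ?_⟩
      have hcount : ∀ v : Fin d, v.val < k →
          (univ.filter (fun x : Fin (m+1) => f0 x = v)).card = q := by
        intro v hv
        have hbound : ∀ t : Fin q, q * v.val + t.val < m + 1 := by
          intro t
          calc q * v.val + t.val < q * v.val + q := Nat.add_lt_add_left t.2 _
            _ = q * (v.val + 1) := (Nat.mul_succ q v.val).symm
            _ ≤ q * k := Nat.mul_le_mul_left q hv
            _ = k * q := mul_comm q k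
            _ = m + 1 := hnq.symm
        have : (univ.filter (fun x : Fin (m+1) => f0 x = v)).card
            = (univ : Finset (Fin q)).card := by
          apply Finset.card_bij' (fun x _ => (⟨x.val % q, Nat.mod_lt _ hq0⟩ : Fin q))
            (fun t _ => (⟨q * v.val + t.val, hbound t⟩ : Fin (m+1)))
          · intro x _; exact Finset.mem_univ _
          · intro t _
            rw [Finset.mem_filter]
            refine ⟨Finset.mem_univ _, ?_⟩
            rw [hf0]
            apply Fin.ext
            show (q * v.val + t.val) / q = v.val
            rw [Nat.mul_add_div hq0, Nat.div_eq_of_lt t.2]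
            omega
          · intro x hx
            rw [Finset.mem_filter] at hx
            have hxv : x.val / q = v.val := congrArg Fin.val hx.2
            apply Fin.ext
            show q * v.val + x.val % q = x.val
            rw [← hxv, Nat.div_add_mod]
          · intro t _
            apply Fin.ext
            show (q * v.val + t.val) % q = t.val
            rw [Nat.mul_add_mod, Nat.mod_eq_of_lt t.2]
        rw [this, Finset.card_univ, Fintype.card_fin]
      have himg : univ.image f0 = univ.filter (fun v : Fin d => v.val < k) := by
        ext v
        simp only [Finset.mem_image, Finset.mem_univ, true_and, Finset.mem_filter]
        constructor
        · rintro ⟨x, rfl⟩; exact hlt x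
        · intro hv
          have hb : q * v.val < m + 1 := by
            calc q * v.val < q * k := mul_lt_mul_of_pos_left hv hq0
              _ = k * q := mul_comm q k
              _ = m + 1 := hnq.symm
          refine ⟨⟨q * v.val, hb⟩, ?_⟩
          rw [hf0]
          apply Fin.ext
          show (q * v.val) / q = v.val
          exact Nat.mul_div_cancel_left v.val hq0
      have hcardimg : (univ.filter (fun v : Fin d => v.val < k)).card = k := by
        have : (univ.filter (fun v : Fin d => v.val < k)).card
            = (univ : Finset (Fin k)).card := by
          apply Finset.card_bij' (fun v hv => (⟨v.val, (Finset.mem_filter.mp hv).2⟩ : Fin k))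
            (fun b _ => (⟨b.val, lt_of_lt_of_le b.2 hkd⟩ : Fin d))
          case hi => intro v _; exact Finset.mem_univ _
          case hj =>
            intro b _
            exact Finset.mem_filter.mpr ⟨Finset.mem_univ _, b.2⟩
          case left_inv => intro v _; rfl
          case right_inv => intro b _; rfl
        rw [this, Finset.card_univ, Fintype.card_fin]
      refine (hP f0).mpr ⟨by rw [himg, hcardimg], fun v hv => ?_⟩
      rw [himg, Finset.mem_filter] at hv
      exact hcount v hv.2
    have hN0 : 0 < N := by
      obtain ⟨f0, hf0⟩ := hPf0
      rw [hNdef]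
      exact Finset.card_pos.mpr ⟨f0, Finset.mem_filter.mpr ⟨Finset.mem_univ _, hf0⟩⟩
    have hcA0 : 0 < (A i).card := by
      by_contra h
      push_neg at h
      interval_cases hcase : (A i).card
      omega
    -- the fiber over i is in bijection with tails
    have hT : (univ.filter (fun r : Fin m → Fin d => P (Fin.cons i r))).card = (A i).card := by
      apply Finset.card_bij (fun r _ => (Fin.cons i r : Fin (m+1) → Fin d))
      · intro r hr
        rw [Finset.mem_filter] at hr
        rw [hA, Finset.mem_filter]
        exact ⟨Finset.mem_univ _, hr.2, Fin.cons_zero _ _⟩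
      · intro a _ b _ h
        funext x
        have := congrFun h x.succ
        simpa [Fin.cons_succ] using this
      · intro f hf
        rw [hA, Finset.mem_filter] at hf
        refine ⟨Fin.tail f, ?_, ?_⟩
        · rw [Finset.mem_filter]
          refine ⟨Finset.mem_univ _, ?_⟩
          have hcf : (Fin.cons i (Fin.tail f) : Fin (m+1) → Fin d) = f := by
            rw [← hf.2.2]; exact Fin.cons_self_tail f
          rw [hcf]; exact hf.2.1
        · rw [← hf.2.2]; exact Fin.cons_self_tail f
    have hreal : ((Real.sqrt N)⁻¹ * (Real.sqrt N)⁻¹ : ℝ) = ((N : ℝ))⁻¹ := by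
      rw [← mul_inv, Real.mul_self_sqrt (Nat.cast_nonneg N)]
    have hstep : (∑ r : Fin m → Fin d,
        ψ (Fin.cons i r) * (starRingEnd ℂ) (ψ (Fin.cons i r)))
        = ∑ r : Fin m → Fin d, (if P (Fin.cons i r) then (((N : ℝ))⁻¹ : ℂ) else 0) := by
      apply Finset.sum_congr rfl
      intro r _
      rw [hψ, Complex.conj_ofReal, ← Complex.ofReal_mul]
      by_cases h : P (Fin.cons i r) <;> simp [h, hreal]
    rw [hstep, ← Finset.sum_filter, Finset.sum_const, hT, nsmul_eq_mul]
    have hcA' : ((A i).card : ℂ) ≠ 0 := Nat.cast_ne_zero.mpr (Nat.pos_iff_ne_zero.mp hcA0)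
    have hd' : ((d : ℂ)) ≠ 0 := Nat.cast_ne_zero.mpr (Nat.pos_iff_ne_zero.mp hd0)
    have hNc : ((N : ℝ) : ℂ) = ((d : ℂ)) * (((A i).card : ℕ) : ℂ) := by
      rw [hNd]; push_cast; ring
    rw [hNc]
    field_simp
  · rw [if_neg hij]
    apply Finset.sum_eq_zero
    intro r _
    by_cases hPi : P (Fin.cons i r)
    · by_cases hPj : P (Fin.cons j r)
      · exfalso
        have hjmem : j ∈ univ.image (Fin.cons j r : Fin (m+1) → Fin d) :=
          Finset.mem_image.mpr ⟨0, Finset.mem_univ _, Fin.cons_zero _ _⟩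
        have hj' := ((hP _).mp hPj).2 j hjmem
        rw [filter_cons_card] at hj'
        rw [if_pos rfl] at hj'
        set t : ℕ := ((univ : Finset (Fin m)).filter (fun x => r x = j)).card with ht
        have ht0 : 0 < t := by omega
        obtain ⟨x, hx⟩ := Finset.card_pos.mp ht0
        rw [Finset.mem_filter] at hx
        have hjmem' : j ∈ univ.image (Fin.cons i r : Fin (m+1) → Fin d) :=
          Finset.mem_image.mpr ⟨x.succ, Finset.mem_univ _, by rw [Fin.cons_succ]; exact hx.2⟩
        have hi' := ((hP _).mp hPi).2 j hjmem'
        rw [filter_cons_card, if_neg hij] at hi'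
        omega
      · simp [hψ, hPj]
    · simp [hψ, hPi]
end

section
/- For the rectangular Young-diagram state |y(k)⟩ with k < n/2, the two-party reduced state is ρ_2 = (1/(d k (n-1)))[ (n-k) ∑_i |ii⟩⟨ii| + (n(k-1)/(d-1)) ∑_{i≠j} (|ij⟩⟨ij| + |ij⟩⟨ji|) ]. -/
open Finset

section RectAux

variable {d m : ℕ}

/-- The "rectangular Young diagram" condition: exactly `k` values, each hit `q` times. -/
def IsY (k q : ℕ) {n d : ℕ} (f : Fin n → Fin d) : Prop :=
  (Finset.univ.image f).card = k ∧
    ∀ v ∈ Finset.univ.image f, (Finset.univ.filter (fun i => f i = v)).card = q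

lemma isY_comp_right {k q n : ℕ} (f : Fin n → Fin d) (τ : Fin n ≃ Fin n)
    (h : IsY k q f) : IsY k q (f ∘ τ) := by
  have himg : Finset.univ.image (f ∘ τ) = Finset.univ.image f := by
    ext v
    simp only [Finset.mem_image, Finset.mem_univ, true_and, Function.comp_apply]
    constructor
    · rintro ⟨a, rfl⟩; exact ⟨τ a, rfl⟩
    · rintro ⟨a, rfl⟩; exact ⟨τ.symm a, by simp⟩
  have hfib : ∀ v : Fin d,
      (Finset.univ.filter (fun i => (f ∘ τ) i = v)).card
        = (Finset.univ.filter (fun i => f i = v)).card := by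
    intro v
    apply Finset.card_bij' (fun a _ => τ a) (fun b _ => τ.symm b)
    · intro a ha
      simp only [Finset.mem_filter, Finset.mem_univ, true_and, Function.comp_apply] at ha ⊢
      exact ha
    · intro b hb
      simp only [Finset.mem_filter, Finset.mem_univ, true_and, Function.comp_apply] at hb ⊢
      simpa using hb
    · intro a _; simp
    · intro b _; simp
  exact ⟨by rw [himg]; exact h.1, fun v hv => by rw [hfib]; exact h.2 v (himg ▸ hv)⟩

lemma isY_comp_right_iff {k q n : ℕ} (f : Fin n → Fin d) (τ : Fin n ≃ Fin n) :
    IsY k q (f ∘ τ) ↔ IsY k q f := by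
  constructor
  · intro h
    have := isY_comp_right (f ∘ τ) τ.symm h
    have hfe : ((f ∘ τ) ∘ τ.symm) = f := by funext x; simp
    rwa [hfe] at this
  · exact isY_comp_right f τ

lemma isY_comp_left {k q n : ℕ} (f : Fin n → Fin d) (σ : Fin d ≃ Fin d)
    (h : IsY k q f) : IsY k q (σ ∘ f) := by
  have himg : Finset.univ.image (σ ∘ f) = (Finset.univ.image f).image σ := by
    rw [Finset.image_image]
  constructor
  · rw [himg, Finset.card_image_of_injective _ σ.injective]; exact h.1
  · intro v hv
    rw [himg] at hv
    obtain ⟨w, hw, rfl⟩ := Finset.mem_image.mp hv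
    have : (Finset.univ.filter (fun i => (σ ∘ f) i = σ w))
        = (Finset.univ.filter (fun i => f i = w)) := by
      apply Finset.filter_congr
      intro i _
      simp [σ.injective.eq_iff]
    rw [this]
    exact h.2 w hw

lemma isY_comp_left_iff {k q n : ℕ} (f : Fin n → Fin d) (σ : Fin d ≃ Fin d) :
    IsY k q (σ ∘ f) ↔ IsY k q f := by
  constructor
  · intro h
    have := isY_comp_left (σ ∘ f) σ.symm h
    have hfe : (⇑σ.symm ∘ (⇑σ ∘ f)) = f := by funext x; simp
    rwa [hfe] at this
  · exact isY_comp_left f σ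

lemma count_cons (i j : Fin d) (r : Fin m → Fin d) (v : Fin d) :
    (Finset.univ.filter (fun p => (Fin.cons i (Fin.cons j r) : Fin (m+2) → Fin d) p = v)).card
      = ((if i = v then 1 else 0) + (if j = v then 1 else 0))
        + (Finset.univ.filter (fun p => r p = v)).card := by
  rw [Finset.card_filter, Fin.sum_univ_succ, Fin.sum_univ_succ, Finset.card_filter]
  simp [Fin.cons_zero, Fin.cons_succ, add_assoc]

lemma count_pos_iff {n : ℕ} (f : Fin n → Fin d) (v : Fin d) :
    v ∈ Finset.univ.image f ↔ 0 < (Finset.univ.filter (fun p => f p = v)).card := by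
  rw [Finset.card_pos, Finset.filter_nonempty_iff]
  simp [Finset.mem_image]

lemma key_multiset {k q : ℕ} (hq3 : 3 ≤ q) {i j i' j' : Fin d} {r : Fin m → Fin d}
    (h1 : IsY k q (Fin.cons i (Fin.cons j r)))
    (h2 : IsY k q (Fin.cons i' (Fin.cons j' r))) :
    (i' = i ∧ j' = j) ∨ (i' = j ∧ j' = i) := by
  have main : ∀ v : Fin d,
      ((if i = v then 1 else 0) + (if j = v then 1 else 0) : ℕ)
        = (if i' = v then 1 else 0) + (if j' = v then 1 else 0) := by
    intro v
    have e1 := count_cons i j r v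
    have e2 := count_cons i' j' r v
    have ha : (if i = v then (1:ℕ) else 0) ≤ 1 := by split <;> omega
    have hb : (if j = v then (1:ℕ) else 0) ≤ 1 := by split <;> omega
    have ha' : (if i' = v then (1:ℕ) else 0) ≤ 1 := by split <;> omega
    have hb' : (if j' = v then (1:ℕ) else 0) ≤ 1 := by split <;> omega
    by_cases hv1 : v ∈ Finset.univ.image (Fin.cons i (Fin.cons j r))
    · have c1 := h1.2 v hv1
      rw [e1] at c1
      have hcr : 0 < (Finset.univ.filter (fun p => r p = v)).card := by omega
      have hv2 : v ∈ Finset.univ.image (Fin.cons i' (Fin.cons j' r)) := by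
        rw [count_pos_iff, e2]; omega
      have c2 := h2.2 v hv2
      rw [e2] at c2
      omega
    · rw [count_pos_iff, e1] at hv1
      by_cases hv2 : v ∈ Finset.univ.image (Fin.cons i' (Fin.cons j' r))
      · have c2 := h2.2 v hv2
        rw [e2] at c2
        omega
      · rw [count_pos_iff, e2] at hv2
        omega
  have hi := main i
  have hj := main j
  simp only [if_pos rfl] at hi hj
  by_cases hji : j = i
  · rw [if_pos hji] at hi
    split_ifs at hi <;> first
      | omega
      | exact Or.inl ⟨by assumption, (by assumption : j' = i).trans hji.symm⟩
  · rw [if_neg hji] at hi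
    rw [if_neg (fun h : i = j => hji h.symm)] at hj
    split_ifs at hi hj <;> first
      | omega
      | exact Or.inl ⟨by assumption, by assumption⟩
      | exact Or.inr ⟨by assumption, by assumption⟩
      | exact absurd ((by assumption : i' = j).symm.trans (by assumption : i' = i)) hji
      | exact absurd ((by assumption : j' = j).symm.trans (by assumption : j' = i)) hji

lemma exists_isY (k q : ℕ) (hk : 0 < k) (hkd : k ≤ d) (hq : k * q = m + 2) :
    ∃ f : Fin (m + 2) → Fin d, IsY k q f := by
  have hq1 : 1 ≤ q := by
    rcases Nat.eq_zero_or_pos q with h | h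
    · subst h; omega
    · exact h
  have hkm : k ≤ m + 2 := by
    calc k = k * 1 := (mul_one k).symm
    _ ≤ k * q := Nat.mul_le_mul_left k hq1
    _ = m + 2 := hq
  refine ⟨fun p => ⟨p.val % k, lt_of_lt_of_le (Nat.mod_lt _ hk) hkd⟩, ?_, ?_⟩
  · -- image card = k
    have himg : Finset.univ.image (fun p : Fin (m+2) => (⟨p.val % k, lt_of_lt_of_le (Nat.mod_lt _ hk) hkd⟩ : Fin d))
        = Finset.univ.image (Fin.castLE hkd) := by
      ext v
      simp only [Finset.mem_image, Finset.mem_univ, true_and]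
      constructor
      · rintro ⟨p, rfl⟩
        exact ⟨⟨p.val % k, Nat.mod_lt _ hk⟩, rfl⟩
      · rintro ⟨u, rfl⟩
        refine ⟨⟨u.val, lt_of_lt_of_le u.isLt hkm⟩, ?_⟩
        apply Fin.ext
        simp [Nat.mod_eq_of_lt u.isLt, Fin.castLE]
    rw [himg, Finset.card_image_of_injective _ (Fin.castLE_injective hkd), Finset.card_univ,
      Fintype.card_fin]
  · -- fibers
    intro v hv
    simp only [Finset.mem_image, Finset.mem_univ, true_and] at hv
    obtain ⟨p, rfl⟩ := hv
    set u : ℕ := p.val % k with hu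
    have huk : u < k := Nat.mod_lt _ hk
    have : (Finset.univ.filter
        (fun x : Fin (m+2) => (⟨x.val % k, lt_of_lt_of_le (Nat.mod_lt _ hk) hkd⟩ : Fin d)
          = ⟨u, lt_of_lt_of_le huk hkd⟩)).card = (Finset.univ : Finset (Fin q)).card := by
      refine Finset.card_bij' (fun x _ => (⟨x.val / k, by
          have hx : x.val < q * k := by rw [mul_comm, hq]; exact x.isLt
          exact (Nat.div_lt_iff_lt_mul hk).2 hx⟩ : Fin q))
        (fun t _ => (⟨u + k * t.val, by
          have h1 : k * (t.val + 1) ≤ k * q := Nat.mul_le_mul_left k t.isLt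
          have h2 : k * (t.val + 1) = k * t.val + k := by ring
          omega⟩ : Fin (m+2))) ?hi ?hj ?hleft ?hright
      case hi => intro a _; exact Finset.mem_univ _
      case hj =>
        intro t _
        simp only [Finset.mem_filter, Finset.mem_univ, true_and]
        apply Fin.ext
        show (u + k * t.val) % k = u
        rw [Nat.add_mul_mod_self_left, Nat.mod_eq_of_lt huk]
      case hleft =>
        intro a ha
        simp only [Finset.mem_filter, Finset.mem_univ, true_and] at ha
        have hval : a.val % k = u := congrArg Fin.val ha
        apply Fin.ext
        show u + k * (a.val / k) = a.val
        rw [← hval]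
        exact Nat.mod_add_div _ _
      case hright =>
        intro t _
        apply Fin.ext
        show (u + k * t.val) / k = t.val
        rw [Nat.add_mul_div_left _ _ hk, Nat.div_eq_of_lt huk, zero_add]
    rw [this, Finset.card_univ, Fintype.card_fin]

lemma sum_decomp {β : Type*} [AddCommMonoid β] (g : (Fin (m+2) → Fin d) → β) :
    ∑ f : Fin (m+2) → Fin d, g f
      = ∑ u : Fin d, ∑ v : Fin d, ∑ r : Fin m → Fin d, g (Fin.cons u (Fin.cons v r)) := by
  rw [← Equiv.sum_comp (Fin.consEquiv (fun _ : Fin (m+2) => Fin d)) g, Fintype.sum_prod_type]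
  refine Finset.sum_congr rfl (fun u _ => ?_)
  rw [← Equiv.sum_comp (Fin.consEquiv (fun _ : Fin (m+1) => Fin d))
      (fun h => g ((Fin.consEquiv (fun _ : Fin (m+2) => Fin d)) (u, h))), Fintype.sum_prod_type]
  rfl

end RectAux

/-- For the rectangular Young-diagram state `|y(k)⟩` with `n = m + 2` particles on
`d` sites and `k < n/2`, the two-party reduced density matrix is
`ρ₂ = (1/(d k (n-1)))[(n-k) ∑_i |ii⟩⟨ii| + (n(k-1)/(d-1)) ∑_{i≠j} (|ij⟩⟨ij| + |ij⟩⟨ji|)]`. -/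
theorem rectangular_state_two_party_marginal (d k m : ℕ) (hk : 0 < k)
    (hdvd : k ∣ (m + 2)) (hkn : 2 * k < m + 2) (hkd : k ≤ d)
    (P : (Fin (m + 2) → Fin d) → Prop) [DecidablePred P]
    (hP : ∀ f, P f ↔
      (Finset.univ.image f).card = k ∧
      ∀ v ∈ Finset.univ.image f,
        (Finset.univ.filter (fun i => f i = v)).card = (m + 2) / k)
    (ψ : (Fin (m + 2) → Fin d) → ℂ)
    (hψ : ∀ f, ψ f = if P f then
      ((Real.sqrt (((Finset.univ : Finset (Fin (m + 2) → Fin d)).filter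
        (fun g => P g)).card))⁻¹ : ℝ) else 0) :
    ∀ i j i' j' : Fin d,
      (∑ r : Fin m → Fin d,
          ψ (Fin.cons i (Fin.cons j r)) *
            (starRingEnd ℂ) (ψ (Fin.cons i' (Fin.cons j' r))))
        = (1 / ((d : ℂ) * k * ((m + 2 : ℕ) - 1)))
            * ((((m + 2 : ℕ) : ℂ) - k)
                 * (if i = j ∧ i' = i ∧ j' = i then 1 else 0)
               + (((m + 2 : ℕ) : ℂ) * ((k : ℂ) - 1) / ((d : ℂ) - 1))
                 * ((if i ≠ j ∧ i' = i ∧ j' = j then 1 else 0)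
                    + (if i ≠ j ∧ i' = j ∧ j' = i then 1 else 0))) := by
  classical
  intro i j i' j'
  set q : ℕ := (m + 2) / k with hqdef
  have hq : k * q = m + 2 := Nat.mul_div_cancel' hdvd
  have hq3 : 3 ≤ q := by
    by_contra hcon
    push_neg at hcon
    have : k * q ≤ k * 2 := Nat.mul_le_mul_left k (by omega)
    omega
  have hP' : ∀ f, P f ↔ IsY k q f := hP
  set S : Finset (Fin (m + 2) → Fin d) := Finset.univ.filter (fun g => P g) with hS
  set M : ℕ := S.card with hM
  set A : Fin d → Fin d → Finset (Fin m → Fin d) :=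
    fun u v => Finset.univ.filter (fun r => P (Fin.cons u (Fin.cons v r))) with hA
  clear_value q S M A
  -- M is positive
  have hMpos : 0 < M := by
    obtain ⟨f, hf⟩ := exists_isY k q hk hkd hq
    rw [hM, hS]
    exact Finset.card_pos.2 ⟨f, Finset.mem_filter.2 ⟨Finset.mem_univ _, (hP' f).2 hf⟩⟩
  -- invariance of P
  have hPpos : ∀ (τ : Fin (m+2) ≃ Fin (m+2)) (f : Fin (m+2) → Fin d), P (f ∘ τ) ↔ P f := by
    intro τ f
    rw [hP' , hP']
    exact isY_comp_right_iff f τ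
  have hPval : ∀ (σ : Fin d ≃ Fin d) (f : Fin (m+2) → Fin d), P (σ ∘ f) ↔ P f := by
    intro σ f
    rw [hP', hP']
    exact isY_comp_left_iff f σ
  -- value of cons at 1
  have hval1 : ∀ (u v : Fin d) (r : Fin m → Fin d),
      (Fin.cons u (Fin.cons v r) : Fin (m+2) → Fin d) 1 = v := by
    intro u v r
    rw [← Fin.succ_zero_eq_one, Fin.cons_succ, Fin.cons_zero]
  -- swapping the first two entries
  have hconsswap : ∀ (u v : Fin d) (r : Fin m → Fin d),
      (Fin.cons u (Fin.cons v r) : Fin (m+2) → Fin d) ∘ (Equiv.swap 0 1)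
        = Fin.cons v (Fin.cons u r) := by
    intro u v r
    funext p
    have h01 : (0 : Fin (m+2)) ≠ 1 := by simp
    refine Fin.cases ?_ (fun p' => ?_) p
    · show (Fin.cons u (Fin.cons v r) : Fin (m+2) → Fin d) (Equiv.swap (0 : Fin (m+2)) 1 0)
        = (Fin.cons v (Fin.cons u r) : Fin (m+2) → Fin d) 0
      rw [Equiv.swap_apply_left, hval1, Fin.cons_zero]
    · refine Fin.cases ?_ (fun p'' => ?_) p'
      · show (Fin.cons u (Fin.cons v r) : Fin (m+2) → Fin d) (Equiv.swap (0 : Fin (m+2)) 1 (Fin.succ 0))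
          = (Fin.cons v (Fin.cons u r) : Fin (m+2) → Fin d) (Fin.succ 0)
        rw [Fin.succ_zero_eq_one, Equiv.swap_apply_right, Fin.cons_zero, ← Fin.succ_zero_eq_one,
          Fin.cons_succ, Fin.cons_zero]
      · show (Fin.cons u (Fin.cons v r) : Fin (m+2) → Fin d) (Equiv.swap (0 : Fin (m+2)) 1 p''.succ.succ)
          = (Fin.cons v (Fin.cons u r) : Fin (m+2) → Fin d) p''.succ.succ
        rw [Equiv.swap_apply_of_ne_of_ne (Fin.succ_ne_zero _)
          (by rw [← Fin.succ_zero_eq_one]; intro h; exact (Fin.succ_ne_zero _) (Fin.succ_injective _ h))]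
        simp [Fin.cons_succ]
  have hswap01 : ∀ (u v : Fin d) (r : Fin m → Fin d),
      P (Fin.cons u (Fin.cons v r)) ↔ P (Fin.cons v (Fin.cons u r)) := by
    intro u v r
    rw [← hconsswap u v r]
    exact (hPpos _ _).symm
  -- M as a double sum of A-cards
  have hMsum : M = ∑ u : Fin d, ∑ v : Fin d, (A u v).card := by
    calc M = ∑ f : Fin (m+2) → Fin d, if P f then 1 else 0 := by
            rw [hM, hS, Finset.card_filter]
      _ = ∑ u : Fin d, ∑ v : Fin d, ∑ r : Fin m → Fin d,
            if P (Fin.cons u (Fin.cons v r)) then 1 else 0 := sum_decomp _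
      _ = ∑ u : Fin d, ∑ v : Fin d, (A u v).card := by
            refine Finset.sum_congr rfl (fun u _ => Finset.sum_congr rfl (fun v _ => ?_))
            rw [hA]
            rw [Finset.card_filter]
  -- value symmetry of the A-cards
  have hAval : ∀ (σ : Fin d ≃ Fin d) (u v : Fin d), (A u v).card = (A (σ u) (σ v)).card := by
    intro σ u v
    refine Finset.card_bij' (fun r _ => σ ∘ r) (fun s _ => σ.symm ∘ s) ?_ ?_ ?_ ?_
    · intro r hr
      simp only [hA, Finset.mem_filter] at hr ⊢
      refine ⟨Finset.mem_univ _, ?_⟩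
      have : (Fin.cons (σ u) (Fin.cons (σ v) (⇑σ ∘ r)) : Fin (m+2) → Fin d)
          = ⇑σ ∘ (Fin.cons u (Fin.cons v r)) := by
        rw [Fin.comp_cons, Fin.comp_cons]
      rw [this, hPval]
      exact hr.2
    · intro s hs
      simp only [hA, Finset.mem_filter] at hs ⊢
      refine ⟨Finset.mem_univ _, ?_⟩
      have : (Fin.cons u (Fin.cons v (⇑σ.symm ∘ s)) : Fin (m+2) → Fin d)
          = ⇑σ.symm ∘ (Fin.cons (σ u) (Fin.cons (σ v) s)) := by
        rw [Fin.comp_cons, Fin.comp_cons, Equiv.symm_apply_apply, Equiv.symm_apply_apply]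
      rw [this, hPval]
      exact hs.2
    · intro r _; funext x; simp
    · intro s _; funext x; simp
  have hAdiag : ∀ u v : Fin d, (A u u).card = (A v v).card := by
    intro u v
    have := hAval (Equiv.swap u v) u u
    rwa [Equiv.swap_apply_left] at this
  have hAoff : ∀ u v u' v' : Fin d, u ≠ v → u' ≠ v' → (A u v).card = (A u' v').card := by
    intro u v u' v' huv hu'v'
    set τ1 := Equiv.swap u u' with hτ1
    have hj1 : τ1 v ≠ u' := by
      intro h
      have : τ1 v = τ1 u := by rw [h, hτ1, Equiv.swap_apply_left]
      exact huv (τ1.injective this).symm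
    set τ2 := Equiv.swap (τ1 v) v' with hτ2
    have h1 : (τ1.trans τ2) u = u' := by
      simp only [Equiv.trans_apply]
      have ht : τ1 u = u' := Equiv.swap_apply_left u u'
      rw [ht]
      exact Equiv.swap_apply_of_ne_of_ne (Ne.symm hj1) hu'v'
    have h2 : (τ1.trans τ2) v = v' := by
      simp only [Equiv.trans_apply]
      exact Equiv.swap_apply_left _ _
    have := hAval (τ1.trans τ2) u v
    rwa [h1, h2] at this
  -- Step A : double counting
  set c : ℕ := (S.filter (fun f => f 1 = f 0)).card with hc
  clear_value c
  have hstepA : c * (m + 1) = M * (q - 1) := by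
    have hT : ∀ f ∈ S,
        (∑ p ∈ Finset.univ.erase (0 : Fin (m+2)), if f p = f 0 then (1:ℕ) else 0) = q - 1 := by
      intro f hf
      rw [← Finset.card_filter]
      have hfY : IsY k q f := (hP' f).1 ((Finset.mem_filter.1 (hS ▸ hf)).2)
      have hfib : (Finset.univ.filter (fun p => f p = f 0)).card = q :=
        hfY.2 (f 0) (Finset.mem_image_of_mem f (Finset.mem_univ 0))
      rw [Finset.filter_erase]
      have hmem : (0 : Fin (m+2)) ∈ Finset.univ.filter (fun p => f p = f 0) :=
        Finset.mem_filter.2 ⟨Finset.mem_univ _, rfl⟩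
      rw [Finset.card_erase_of_mem hmem, hfib]
    have hcol : ∀ p ∈ Finset.univ.erase (0 : Fin (m+2)),
        (S.filter (fun f => f p = f 0)).card = c := by
      intro p hp
      have hp0 : p ≠ 0 := (Finset.mem_erase.1 hp).1
      set τ := Equiv.swap (1 : Fin (m+2)) p with hτ
      have h10 : (1 : Fin (m+2)) ≠ 0 := by simp
      have hτ0 : τ 0 = 0 :=
        Equiv.swap_apply_of_ne_of_ne (Ne.symm h10) (Ne.symm hp0)
      rw [hc, hS]
      refine Finset.card_bij' (fun f _ => f ∘ τ) (fun f _ => f ∘ τ) ?hi ?hj ?hleft ?hright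
      case hi =>
        intro f hf
        rw [Finset.mem_filter] at hf ⊢
        have hfP : P f := (Finset.mem_filter.1 hf.1).2
        refine ⟨Finset.mem_filter.2 ⟨Finset.mem_univ _, (hPpos τ f).2 hfP⟩, ?_⟩
        show f (τ 1) = f (τ 0)
        rw [hτ0, hτ, Equiv.swap_apply_left]
        exact hf.2
      case hj =>
        intro f hf
        rw [Finset.mem_filter] at hf ⊢
        have hfP : P f := (Finset.mem_filter.1 hf.1).2
        refine ⟨Finset.mem_filter.2 ⟨Finset.mem_univ _, (hPpos τ f).2 hfP⟩, ?_⟩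
        show f (τ p) = f (τ 0)
        rw [hτ0, hτ, Equiv.swap_apply_right]
        exact hf.2
      case hleft => intro f _; funext x; simp [hτ, Equiv.swap_apply_self]
      case hright => intro f _; funext x; simp [hτ, Equiv.swap_apply_self]
    have h1 : ∑ f ∈ S, (∑ p ∈ Finset.univ.erase (0 : Fin (m+2)), if f p = f 0 then (1:ℕ) else 0)
        = M * (q - 1) := by
      rw [Finset.sum_congr rfl hT, Finset.sum_const, smul_eq_mul, ← hM]
    have h2 : ∑ f ∈ S, (∑ p ∈ Finset.univ.erase (0 : Fin (m+2)), if f p = f 0 then (1:ℕ) else 0)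
        = (m + 1) * c := by
      rw [Finset.sum_comm]
      have : ∀ p ∈ Finset.univ.erase (0 : Fin (m+2)),
          (∑ f ∈ S, if f p = f 0 then (1:ℕ) else 0) = c := by
        intro p hp
        rw [← Finset.card_filter]
        exact hcol p hp
      rw [Finset.sum_congr rfl this, Finset.sum_const, smul_eq_mul,
        Finset.card_erase_of_mem (Finset.mem_univ _), Finset.card_univ, Fintype.card_fin]
      congr 1
    rw [mul_comm, ← h2]
    exact h1
  -- c as a sum of diagonal A-cards
  have hcsum : c = ∑ u : Fin d, (A u u).card := by
    have hstep : ∀ u v : Fin d, (∑ r : Fin m → Fin d,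
        if P (Fin.cons u (Fin.cons v r)) ∧ v = u then (1:ℕ) else 0)
          = if v = u then (A u v).card else 0 := by
      intro u v
      by_cases h : v = u
      · subst h
        simp only [eq_self_iff_true, and_true, if_true, hA]
        exact (Finset.card_filter _ _).symm
      · simp [h]
    calc c = ∑ f : Fin (m+2) → Fin d, if P f ∧ f 1 = f 0 then 1 else 0 := by
            rw [hc, hS, Finset.filter_filter, Finset.card_filter]
      _ = ∑ u : Fin d, ∑ v : Fin d, ∑ r : Fin m → Fin d,
            if P (Fin.cons u (Fin.cons v r)) ∧ (Fin.cons u (Fin.cons v r) : Fin (m+2) → Fin d) 1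
              = (Fin.cons u (Fin.cons v r) : Fin (m+2) → Fin d) 0 then 1 else 0 :=
            sum_decomp _
      _ = ∑ u : Fin d, ∑ v : Fin d, ∑ r : Fin m → Fin d,
            if P (Fin.cons u (Fin.cons v r)) ∧ v = u then 1 else 0 := by
            refine Finset.sum_congr rfl (fun u _ => Finset.sum_congr rfl (fun v _ =>
              Finset.sum_congr rfl (fun r _ => ?_)))
            rw [hval1, Fin.cons_zero]
      _ = ∑ u : Fin d, ∑ v : Fin d, (if v = u then (A u v).card else 0) := by
            refine Finset.sum_congr rfl (fun u _ => Finset.sum_congr rfl (fun v _ => hstep u v))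
      _ = ∑ u : Fin d, (A u u).card := by
            refine Finset.sum_congr rfl (fun u _ => ?_)
            rw [Finset.sum_ite_eq' Finset.univ u (fun v => (A u v).card), if_pos (Finset.mem_univ _)]
  -- the ψ sum
  have hM_real : Real.sqrt M * Real.sqrt M = (M:ℝ) := Real.mul_self_sqrt (Nat.cast_nonneg M)
  have hsum : (∑ r : Fin m → Fin d,
      ψ (Fin.cons i (Fin.cons j r)) * (starRingEnd ℂ) (ψ (Fin.cons i' (Fin.cons j' r))))
      = (M:ℂ)⁻¹ * ((Finset.univ.filter (fun r : Fin m → Fin d =>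
          P (Fin.cons i (Fin.cons j r)) ∧ P (Fin.cons i' (Fin.cons j' r)))).card) := by
    have hterm : ∀ r : Fin m → Fin d,
        ψ (Fin.cons i (Fin.cons j r)) * (starRingEnd ℂ) (ψ (Fin.cons i' (Fin.cons j' r)))
          = if P (Fin.cons i (Fin.cons j r)) ∧ P (Fin.cons i' (Fin.cons j' r))
            then (M:ℂ)⁻¹ else 0 := by
      intro r
      rw [hψ, hψ]
      by_cases hx : P (Fin.cons i (Fin.cons j r)) <;>
        by_cases hy : P (Fin.cons i' (Fin.cons j' r))
      · rw [if_pos hx, if_pos hy, if_pos ⟨hx, hy⟩, Complex.conj_ofReal,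
          ← Complex.ofReal_mul, ← mul_inv, hM_real, Complex.ofReal_inv, Complex.ofReal_natCast]
      · rw [if_pos hx, if_neg hy, if_neg (fun hc => hy hc.2), Complex.ofReal_zero, map_zero,
          mul_zero]
      · rw [if_neg hx, if_pos hy, if_neg (fun hc => hx hc.1), Complex.ofReal_zero, zero_mul]
      · rw [if_neg hx, if_neg hy, if_neg (fun hc => hx hc.1), Complex.ofReal_zero, zero_mul]
    rw [Finset.sum_congr rfl (fun r _ => hterm r)]
    have : ∀ r : Fin m → Fin d,
        (if P (Fin.cons i (Fin.cons j r)) ∧ P (Fin.cons i' (Fin.cons j' r))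
          then (M:ℂ)⁻¹ else 0)
        = (M:ℂ)⁻¹ * (if P (Fin.cons i (Fin.cons j r)) ∧ P (Fin.cons i' (Fin.cons j' r))
          then 1 else 0) := by
      intro r; split <;> simp
    rw [Finset.sum_congr rfl (fun r _ => this r), ← Finset.mul_sum, Finset.sum_boole]
  -- nonzero facts
  have hM0 : (M:ℂ) ≠ 0 := Nat.cast_ne_zero.2 hMpos.ne'
  have hd0 : (d:ℂ) ≠ 0 := Nat.cast_ne_zero.2 (lt_of_lt_of_le hk hkd).ne'
  have hk0 : (k:ℂ) ≠ 0 := Nat.cast_ne_zero.2 hk.ne'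
  have hm10 : ((m:ℂ) + 1) ≠ 0 := by
    have hcast : ((m:ℂ) + 1) = ((m+1 : ℕ) : ℂ) := by push_cast; ring
    rw [hcast]; exact Nat.cast_ne_zero.2 (Nat.succ_ne_zero m)
  -- cast equations
  have E1 : (c:ℂ) * ((m:ℂ) + 1) = (M:ℂ) * ((q:ℂ) - 1) := by
    have hq1 : 1 ≤ q := le_trans (by norm_num) hq3
    have h' := congrArg (Nat.cast : ℕ → ℂ) hstepA
    rw [Nat.cast_mul, Nat.cast_mul, Nat.cast_sub hq1] at h'
    push_cast at h'
    exact h'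
  have Ekq : (k:ℂ) * (q:ℂ) = (m:ℂ) + 2 := by
    have := congrArg (Nat.cast : ℕ → ℂ) hq
    push_cast at this
    exact this
  have hcast2 : ((m + 2 : ℕ) : ℂ) - 1 = (m : ℂ) + 1 := by push_cast; ring
  have hden : ((d : ℂ) * (k : ℂ) * (((m + 2 : ℕ) : ℂ) - 1)) ≠ 0 := by
    rw [hcast2]
    exact mul_ne_zero (mul_ne_zero hd0 hk0) hm10
  -- main case analysis
  by_cases hij : i = j
  · subst hij
    by_cases h : i' = i ∧ j' = i
    · obtain ⟨h1, h2⟩ := h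
      rw [hsum, h1, h2]
      have hBA : (Finset.univ.filter (fun r : Fin m → Fin d =>
          P (Fin.cons i (Fin.cons i r)) ∧ P (Fin.cons i (Fin.cons i r)))) = A i i := by
        simp only [hA, and_self]
      rw [hBA]
      have E2 : (c:ℂ) = (d:ℂ) * ((A i i).card : ℂ) := by
        have hnat : c = d * (A i i).card := by
          rw [hcsum]
          rw [Finset.sum_congr rfl (fun u _ => hAdiag u i), Finset.sum_const,
            Finset.card_univ, Fintype.card_fin, smul_eq_mul]
        exact_mod_cast congrArg (Nat.cast : ℕ → ℂ) hnat
      rw [if_pos (show i = i ∧ i = i ∧ i = i from ⟨rfl, rfl, rfl⟩),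
        if_neg (show ¬(i ≠ i ∧ i = i ∧ i = i) from fun hc => hc.1 rfl)]
      rw [show ((0:ℂ) + 0) = 0 by ring, mul_one, mul_zero, add_zero]
      rw [inv_mul_eq_div, one_div, inv_mul_eq_div, div_eq_div_iff hM0 hden]
      push_cast
      linear_combination (k:ℂ) * E1 - (k:ℂ) * ((m:ℂ)+1) * E2 + (M:ℂ) * Ekq
    · rw [hsum]
      have hB : (Finset.univ.filter (fun r : Fin m → Fin d =>
          P (Fin.cons i (Fin.cons i r)) ∧ P (Fin.cons i' (Fin.cons j' r)))) = ∅ := by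
        rw [Finset.filter_eq_empty_iff]
        rintro r _ ⟨hp1, hp2⟩
        rcases key_multiset hq3 ((hP' _).1 hp1) ((hP' _).1 hp2) with ⟨ha, hb⟩ | ⟨ha, hb⟩ <;>
          exact h ⟨ha, hb⟩
      rw [hB]
      simp [h]
  · -- i ≠ j
    have hd2 : 1 < d := by
      have : 1 < Fintype.card (Fin d) := Fintype.one_lt_card_iff_nontrivial.2 ⟨⟨i, j, hij⟩⟩
      rwa [Fintype.card_fin] at this
    have hd1 : (d:ℂ) - 1 ≠ 0 := sub_ne_zero.mpr (by
      exact_mod_cast hd2.ne')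
    have E2 : (c:ℂ) = (d:ℂ) * ((A i i).card : ℂ) := by
      have hnat : c = d * (A i i).card := by
        rw [hcsum]
        rw [Finset.sum_congr rfl (fun u _ => hAdiag u i), Finset.sum_const,
          Finset.card_univ, Fintype.card_fin, smul_eq_mul]
      exact_mod_cast congrArg (Nat.cast : ℕ → ℂ) hnat
    have E3nat : M = d * ((A i i).card + (d - 1) * (A i j).card) := by
      rw [hMsum]
      have hrow : ∀ u : Fin d, (∑ v : Fin d, (A u v).card)
          = (A i i).card + (d - 1) * (A i j).card := by
        intro u
        rw [← Finset.add_sum_erase _ _ (Finset.mem_univ u)]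
        congr 1
        · exact hAdiag u i
        · rw [Finset.sum_congr rfl (fun v hv => hAoff u v i j
            (fun he => (Finset.mem_erase.1 hv).1 he.symm) hij), Finset.sum_const, smul_eq_mul,
            Finset.card_erase_of_mem (Finset.mem_univ _), Finset.card_univ, Fintype.card_fin]
      rw [Finset.sum_congr rfl (fun u _ => hrow u), Finset.sum_const, smul_eq_mul,
        Finset.card_univ, Fintype.card_fin]
    have E3 : (M:ℂ) = (d:ℂ) * (((A i i).card : ℂ) + ((d:ℂ) - 1) * ((A i j).card : ℂ)) := by
      have := congrArg (Nat.cast : ℕ → ℂ) E3nat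
      push_cast [Nat.cast_sub hd2.le] at this
      exact this
    by_cases h2 : i' = i ∧ j' = j
    · obtain ⟨ha, hb⟩ := h2
      rw [hsum, ha, hb]
      have hBA : (Finset.univ.filter (fun r : Fin m → Fin d =>
          P (Fin.cons i (Fin.cons j r)) ∧ P (Fin.cons i (Fin.cons j r)))) = A i j := by
        simp only [hA, and_self]
      rw [hBA]
      rw [if_neg (show ¬(i = j ∧ i = i ∧ j = i) from fun hc => hij hc.1),
        if_pos (show i ≠ j ∧ i = i ∧ j = j from ⟨hij, rfl, rfl⟩),
        if_neg (show ¬(i ≠ j ∧ i = j ∧ j = i) from fun hc => hij hc.2.1)]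
      rw [show ((1:ℂ) + 0) = 1 by ring, mul_one, mul_zero, zero_add]
      rw [inv_mul_eq_div, one_div, inv_mul_eq_div, div_div, div_eq_div_iff hM0
        (mul_ne_zero hd1 hden)]
      push_cast
      linear_combination (-(k:ℂ)) * E1 + (k:ℂ) * ((m:ℂ)+1) * E2
        - (k:ℂ) * ((m:ℂ)+1) * E3 - (M:ℂ) * Ekq
    · by_cases h3 : i' = j ∧ j' = i
      · obtain ⟨ha, hb⟩ := h3
        rw [hsum, ha, hb]
        have hBA : (Finset.univ.filter (fun r : Fin m → Fin d =>
            P (Fin.cons i (Fin.cons j r)) ∧ P (Fin.cons j (Fin.cons i r)))) = A i j := by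
          have hiff : ∀ r : Fin m → Fin d,
              (P (Fin.cons i (Fin.cons j r)) ∧ P (Fin.cons j (Fin.cons i r)))
                ↔ P (Fin.cons i (Fin.cons j r)) :=
            fun r => ⟨fun hc => hc.1, fun hc => ⟨hc, (hswap01 i j r).1 hc⟩⟩
          rw [Finset.filter_congr (fun r _ => hiff r)]
          simp only [hA]
        rw [hBA]
        rw [if_neg (show ¬(i = j ∧ j = i ∧ i = i) from fun hc => hij hc.1),
          if_neg (show ¬(i ≠ j ∧ j = i ∧ i = j) from fun hc => hij hc.2.1.symm),
          if_pos (show i ≠ j ∧ j = j ∧ i = i from ⟨hij, rfl, rfl⟩)]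
        rw [show ((0:ℂ) + 1) = 1 by ring, mul_one, mul_zero, zero_add]
        rw [inv_mul_eq_div, one_div, inv_mul_eq_div, div_div, div_eq_div_iff hM0
          (mul_ne_zero hd1 hden)]
        push_cast
        linear_combination (-(k:ℂ)) * E1 + (k:ℂ) * ((m:ℂ)+1) * E2
          - (k:ℂ) * ((m:ℂ)+1) * E3 - (M:ℂ) * Ekq
      · rw [hsum]
        have hB : (Finset.univ.filter (fun r : Fin m → Fin d =>
            P (Fin.cons i (Fin.cons j r)) ∧ P (Fin.cons i' (Fin.cons j' r)))) = ∅ := by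
          rw [Finset.filter_eq_empty_iff]
          rintro r _ ⟨hp1, hp2⟩
          rcases key_multiset hq3 ((hP' _).1 hp1) ((hP' _).1 hp2) with ⟨ha, hb⟩ | ⟨ha, hb⟩
          · exact h2 ⟨ha, hb⟩
          · exact h3 ⟨ha, hb⟩
        rw [hB]
        simp [hij, h2, h3]
end

section
/- With ρ_{11} as above, the vector |λ_2⟩ = |12⟩ + |21⟩ + ((d-4)/(d-2))∑_{i>2}(|2i⟩+|i2⟩) − (2/(d-2))∑_{i≠j, i,j>2}|ij⟩ is an eigenvector of ρ_{11} with eigenvalue λ_2 = 2C_2 + 2(d-4)B_3 − 2(d-3)B_1. -/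
set_option maxHeartbeats 1000000


/-- The vector `|λ₂⟩ = |ab⟩ + |ba⟩ + ((d-4)/(d-2)) ∑_{i∉{a,b}} (|bi⟩+|ib⟩)
− (2/(d-2)) ∑_{i≠j, i,j∉{a,b}} |ij⟩` (for distinct sites `a, b`) is an
eigenvector of the site-symmetric matrix `ρ₁₁` with eigenvalue
`λ₂ = 2C₂ + 2(d-4)B₃ − 2(d-3)B₁`. -/
theorem rho11_second_eigenvector (d : ℕ) (hd : 5 ≤ d) (C2 B3 B1 : ℝ)
    (ρ11 : Matrix (Fin d × Fin d) (Fin d × Fin d) ℝ)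
    (hρ : ∀ i j k l : Fin d, ρ11 (i, j) (k, l) =
      if i = j ∨ k = l then 0
      else if (k, l) = (i, j) ∨ (k, l) = (j, i) then C2
      else if i = k ∨ i = l ∨ j = k ∨ j = l then B3
      else B1)
    (a b : Fin d) (hab : a ≠ b)
    (v : Fin d × Fin d → ℝ)
    (hv : ∀ i j : Fin d, v (i, j) =
      if (i, j) = (a, b) ∨ (i, j) = (b, a) then 1
      else if (i = b ∧ j ≠ a ∧ j ≠ b) ∨ (j = b ∧ i ≠ a ∧ i ≠ b) then
        ((d : ℝ) - 4) / ((d : ℝ) - 2)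
      else if i ≠ j ∧ i ≠ a ∧ i ≠ b ∧ j ≠ a ∧ j ≠ b then
        -(2 / ((d : ℝ) - 2))
      else 0) :
    ρ11.mulVec v
      = (2 * C2 + 2 * ((d : ℝ) - 4) * B3 - 2 * ((d : ℝ) - 3) * B1) • v := by
  have hd5 : (5:ℝ) ≤ (d:ℝ) := by exact_mod_cast hd
  have hd2 : ((d:ℝ) - 2) ≠ 0 := by linarith
  have vdiag : ∀ k : Fin d, v (k, k) = 0 := by
    intro k
    rw [hv]
    simp only [Prod.mk.injEq, ne_eq, not_true, true_and, and_true, false_and, and_false, or_false, false_or, or_self, not_false_iff]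
    split_ifs <;> first | rfl | (exfalso; omega) | (exfalso; tauto)
  have vsymm : ∀ i j : Fin d, v (j, i) = v (i, j) := by
    intro i j
    rw [hv, hv]
    simp only [Prod.mk.injEq, ne_eq, not_true, true_and, and_true, false_and, and_false, or_false, false_or, or_self, not_false_iff]
    exact if_congr (by omega) rfl (if_congr (by omega) rfl
      (if_congr (by omega) rfl rfl))
  have sum_if_const : ∀ (c : Fin d) (x : ℝ),
      (∑ l : Fin d, if l = c then x else 0) = x := by
    intro c x; simp
  have rowval_a : ∀ l, v (a, l) = if l = b then 1 else 0 := by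
    intro l
    rw [hv]
    simp only [Prod.mk.injEq, ne_eq, not_true, true_and, and_true, false_and, and_false, or_false, false_or, or_self, not_false_iff]
    split_ifs <;> first | rfl | (exfalso; omega) | (exfalso; tauto)
  have rowval_b : ∀ l, v (b, l) = ((d:ℝ)-4)/((d:ℝ)-2)
      + (if l = a then 1 - ((d:ℝ)-4)/((d:ℝ)-2) else 0)
      + (if l = b then -(((d:ℝ)-4)/((d:ℝ)-2)) else 0) := by
    intro l
    rw [hv]
    simp only [Prod.mk.injEq, ne_eq, not_true, true_and, and_true, false_and, and_false, or_false, false_or, or_self, not_false_iff]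
    split_ifs <;> first | ring1 | (exfalso; omega) | (exfalso; tauto)
  have rowval_c : ∀ c, c ≠ a → c ≠ b → ∀ l, v (c, l) = -(2/((d:ℝ)-2))
      + (if l = a then 2/((d:ℝ)-2) else 0)
      + (if l = b then ((d:ℝ)-4)/((d:ℝ)-2) + 2/((d:ℝ)-2) else 0)
      + (if l = c then 2/((d:ℝ)-2) else 0) := by
    intro c hca hcb l
    rw [hv]
    simp only [Prod.mk.injEq, ne_eq, not_true, true_and, and_true, false_and, and_false, or_false, false_or, or_self, not_false_iff]
    split_ifs <;> first | ring1 | (exfalso; omega) | (exfalso; tauto)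
  have rsum : ∀ i : Fin d, (∑ l, v (i, l)) =
      if i = a then 1 else if i = b then (d:ℝ) - 3 else -1 := by
    intro i
    by_cases hia : i = a
    · subst hia
      rw [if_pos rfl]
      rw [Finset.sum_congr rfl fun l _ => rowval_a l, sum_if_const]
    by_cases hib : i = b
    · subst hib
      rw [if_neg hia, if_pos rfl]
      rw [Finset.sum_congr rfl fun l _ => rowval_b l]
      rw [Finset.sum_add_distrib, Finset.sum_add_distrib, sum_if_const,
        sum_if_const, Finset.sum_const, Finset.card_univ, Fintype.card_fin,
        nsmul_eq_mul]
      field_simp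
      ring
    · rw [if_neg hia, if_neg hib]
      rw [Finset.sum_congr rfl fun l _ => rowval_c i hia hib l]
      rw [Finset.sum_add_distrib, Finset.sum_add_distrib, Finset.sum_add_distrib,
        sum_if_const, sum_if_const, sum_if_const, Finset.sum_const,
        Finset.card_univ, Fintype.card_fin, nsmul_eq_mul]
      field_simp
      ring
  have hT : (∑ y : Fin d × Fin d, v y) = 0 := by
    rw [Fintype.sum_prod_type]
    have h1 : ∀ i : Fin d, (∑ l, v (i, l)) =
        -1 + (if i = a then 2 else 0) + (if i = b then (d:ℝ)-2 else 0) := by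
      intro i
      rw [rsum]
      split_ifs <;> first | ring1 | (exfalso; omega) | (exfalso; tauto)
    rw [Finset.sum_congr rfl fun i _ => h1 i]
    rw [Finset.sum_add_distrib, Finset.sum_add_distrib, sum_if_const,
      sum_if_const, Finset.sum_const, Finset.card_univ, Fintype.card_fin,
      nsmul_eq_mul]
    ring
  have hD : ∀ i j : Fin d, i ≠ j →
      (∑ l, v (i, l)) + (∑ l, v (j, l)) = ((d:ℝ) - 2) * v (i, j) := by
    intro i j hij
    rw [rsum, rsum, hv]
    simp only [Prod.mk.injEq, ne_eq, not_true, true_and, and_true, false_and, and_false, or_false, false_or, or_self, not_false_iff]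
    split_ifs <;> first | (field_simp; ring1) | ring1 | (exfalso; omega) | (exfalso; tauto)
  have hpt : ∀ c : Fin d × Fin d, (∑ y : Fin d × Fin d,
      if y = c then v y else 0) = v c := by
    intro c; simp
  have hrow : ∀ c : Fin d, (∑ y : Fin d × Fin d,
      if y.1 = c then v y else 0) = ∑ l, v (c, l) := by
    intro c
    rw [Fintype.sum_prod_type]
    calc (∑ k, ∑ l, if k = c then v (k, l) else 0)
        = ∑ k, (if k = c then ∑ l, v (k, l) else 0) := by
          refine Finset.sum_congr rfl fun k _ => ?_
          split_ifs <;> simp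
      _ = ∑ l, v (c, l) := by simp
  have hcol : ∀ c : Fin d, (∑ y : Fin d × Fin d,
      if y.2 = c then v y else 0) = ∑ l, v (c, l) := by
    intro c
    rw [Fintype.sum_prod_type]
    calc (∑ k, ∑ l, if l = c then v (k, l) else 0)
        = ∑ k, v (k, c) := by
          refine Finset.sum_congr rfl fun k _ => ?_
          simp
      _ = ∑ l, v (c, l) := Finset.sum_congr rfl fun k _ => vsymm c k
  funext x
  obtain ⟨i, j⟩ := x
  simp only [Matrix.mulVec, dotProduct, Pi.smul_apply, smul_eq_mul]
  by_cases hij : i = j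
  · subst hij
    rw [vdiag, mul_zero]
    apply Finset.sum_eq_zero
    intro y _
    obtain ⟨k, l⟩ := y
    rw [hρ, if_pos (Or.inl rfl), zero_mul]
  · have step : ∀ y : Fin d × Fin d, ρ11 (i, j) y * v y =
        B1 * v y
        + (C2 - B3) * ((if y = (i,j) then v y else 0) + (if y = (j,i) then v y else 0))
        + (B3 - B1) * ((if y.1 = i then v y else 0) + (if y.1 = j then v y else 0)
            + (if y.2 = i then v y else 0) + (if y.2 = j then v y else 0)
            - (if y = (i,j) then v y else 0) - (if y = (j,i) then v y else 0)
            - (if y = (i,i) then v y else 0) - (if y = (j,j) then v y else 0)) := by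
      intro y
      obtain ⟨k, l⟩ := y
      rw [hρ]
      by_cases hkl : k = l
      · subst hkl
        rw [vdiag]
        simp
      · rw [if_neg (by omega : ¬(i = j ∨ k = l))]
        simp only [Prod.mk.injEq, ne_eq, not_true, true_and, and_true, false_and, and_false, or_false, false_or, or_self, not_false_iff]
        split_ifs <;> first | ring1 | (exfalso; omega) | (exfalso; tauto)
    rw [Finset.sum_congr rfl fun y _ => step y]
    simp only [Finset.sum_add_distrib, Finset.sum_sub_distrib, ← Finset.mul_sum,
      hT, hpt, hrow, hcol, vdiag, vsymm i j]
    linear_combination (2*B3 - 2*B1) * (hD i j hij)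
end

section
/- If the PSD matrix ρ_{11} defined by parameters C_2, B_3, B_1 as above is positive semidefinite, then both 2C_2 + 4(d-2)B_3 + (d-2)(d-3)B_1 ≥ 0 and 2C_2 + 2(d-4)B_3 − 2(d-3)B_1 ≥ 0; consequently, if B_3 ≥ 0 then −2C_2/(d-2)(d-3) − 4B_3/(d-3) ≤ B_1 ≤ C_2/(d-3) + ((d-4)/(d-3))B_3. -/
open Finset

lemma sum_mask2 {d : ℕ} {i j : Fin d} (hij : i ≠ j) (f : Fin d → ℝ) :
    ∑ k, (if k = i then 0 else if k = j then 0 else f k) = (∑ k, f k) - f i - f j := by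
  have h : ∀ k : Fin d, (if k = i then (0:ℝ) else if k = j then 0 else f k)
      = f k - (if k = i then f k else 0) - (if k = j then f k else 0) := by
    intro k
    by_cases h1 : k = i
    · subst h1; simp [hij]
    · by_cases h2 : k = j <;> simp [h1, h2, hij.symm]
  rw [Finset.sum_congr rfl fun k _ => h k]
  simp [Finset.sum_sub_distrib, Finset.sum_ite_eq']

lemma sum_mask1 {d : ℕ} (i : Fin d) (f : Fin d → ℝ) :
    ∑ k, (if k = i then 0 else f k) = (∑ k, f k) - f i := by
  have h : ∀ k : Fin d, (if k = i then (0:ℝ) else f k)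
      = f k - (if k = i then f k else 0) := by
    intro k; by_cases h1 : k = i <;> simp [h1]
  rw [Finset.sum_congr rfl fun k _ => h k]
  simp [Finset.sum_sub_distrib, Finset.sum_ite_eq']

lemma sum_mask1' {d : ℕ} (i : Fin d) (f : Fin d → ℝ) :
    ∑ k, (if i = k then 0 else f k) = (∑ k, f k) - f i := by
  have h : ∀ k : Fin d, (if i = k then (0:ℝ) else f k) = if k = i then 0 else f k := by
    intro k; by_cases h1 : k = i <;> simp [h1, Ne.symm]
  rw [Finset.sum_congr rfl fun k _ => h k, sum_mask1]

lemma row_eq {d : ℕ} (C2 B3 B1 : ℝ) (ρ11 : Matrix (Fin d × Fin d) (Fin d × Fin d) ℝ)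
    (hρ : ∀ i j k l : Fin d, ρ11 (i, j) (k, l) =
      if i = j ∨ k = l then 0
      else if (k, l) = (i, j) ∨ (k, l) = (j, i) then C2
      else if i = k ∨ i = l ∨ j = k ∨ j = l then B3
      else B1)
    (x : Fin d × Fin d → ℝ) (i j : Fin d) (hij : i ≠ j) :
    ∑ q : Fin d × Fin d, ρ11 (i, j) q * x q =
      C2 * (x (i, j) + x (j, i))
      + B3 * ((∑ l, x (i, l)) - x (i, i) - x (i, j))
      + B3 * ((∑ l, x (j, l)) - x (j, j) - x (j, i))
      + ((∑ k, (B3 * (x (k, i) + x (k, j))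
            + B1 * ((∑ l, x (k, l)) - x (k, i) - x (k, j) - x (k, k))))
         - (B3 * (x (i, i) + x (i, j))
            + B1 * ((∑ l, x (i, l)) - x (i, i) - x (i, j) - x (i, i)))
         - (B3 * (x (j, i) + x (j, j))
            + B1 * ((∑ l, x (j, l)) - x (j, i) - x (j, j) - x (j, j)))) := by
  have hFi : ∑ l, ρ11 (i, j) (i, l) * x (i, l)
      = C2 * x (i, j) + B3 * ((∑ l, x (i, l)) - x (i, i) - x (i, j)) := by
    have h : ∀ l, ρ11 (i, j) (i, l) * x (i, l)
        = B3 * x (i, l) - (if l = i then B3 * x (i, l) else 0)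
          + (if l = j then (C2 - B3) * x (i, l) else 0) := by
      intro l
      rw [hρ]
      by_cases h1 : l = i
      · subst h1; simp [hij]
      · by_cases h2 : l = j
        · subst h2; simp [hij, h1, Ne.symm h1, Prod.ext_iff]; ring
        · simp [hij, h1, h2, Ne.symm h1, Ne.symm h2, Prod.ext_iff]
    rw [Finset.sum_congr rfl fun l _ => h l]
    rw [Finset.sum_add_distrib, Finset.sum_sub_distrib, ← Finset.mul_sum]
    simp [Finset.sum_ite_eq']
    ring
  have hFj : ∑ l, ρ11 (i, j) (j, l) * x (j, l)
      = C2 * x (j, i) + B3 * ((∑ l, x (j, l)) - x (j, j) - x (j, i)) := by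
    have h : ∀ l, ρ11 (i, j) (j, l) * x (j, l)
        = B3 * x (j, l) - (if l = j then B3 * x (j, l) else 0)
          + (if l = i then (C2 - B3) * x (j, l) else 0) := by
      intro l
      rw [hρ]
      by_cases h1 : l = j
      · subst h1; simp [hij, hij.symm]
      · by_cases h2 : l = i
        · subst h2; simp [hij, hij.symm, h1, Ne.symm h1, Prod.ext_iff]; ring
        · simp [hij, hij.symm, h1, h2, Ne.symm h1, Ne.symm h2, Prod.ext_iff]
    rw [Finset.sum_congr rfl fun l _ => h l]
    rw [Finset.sum_add_distrib, Finset.sum_sub_distrib, ← Finset.mul_sum]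
    simp [Finset.sum_ite_eq']
    ring
  have hG : ∀ k, k ≠ i → k ≠ j → ∑ l, ρ11 (i, j) (k, l) * x (k, l)
      = B3 * (x (k, i) + x (k, j))
        + B1 * ((∑ l, x (k, l)) - x (k, i) - x (k, j) - x (k, k)) := by
    intro k hki hkj
    have h : ∀ l, ρ11 (i, j) (k, l) * x (k, l)
        = B1 * x (k, l) - (if l = k then B1 * x (k, l) else 0)
          + (if l = i then (B3 - B1) * x (k, l) else 0)
          + (if l = j then (B3 - B1) * x (k, l) else 0) := by
      intro l
      rw [hρ]
      by_cases h1 : l = k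
      · subst h1; simp [hij, hij.symm, hki, hkj, Ne.symm hki, Ne.symm hkj]
      · by_cases h2 : l = i
        · subst h2
          simp [hij, hij.symm, hki, hkj, h1, Ne.symm h1, Ne.symm hki, Ne.symm hkj,
            Prod.ext_iff]
          ring
        · by_cases h3 : l = j
          · subst h3
            simp [hij, hij.symm, hki, hkj, h1, h2, Ne.symm h1, Ne.symm h2, Ne.symm hki,
              Ne.symm hkj, Prod.ext_iff]
            ring
          · simp [hij, hki, hkj, h1, h2, h3, Ne.symm h1, Ne.symm h2, Ne.symm h3,
              Ne.symm hki, Ne.symm hkj, Prod.ext_iff]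
    rw [Finset.sum_congr rfl fun l _ => h l]
    rw [Finset.sum_add_distrib, Finset.sum_add_distrib, Finset.sum_sub_distrib,
      ← Finset.mul_sum]
    simp [Finset.sum_ite_eq']
    ring
  have hq : ∑ q : Fin d × Fin d, ρ11 (i, j) q * x q
      = ∑ k, ∑ l, ρ11 (i, j) (k, l) * x (k, l) := by
    rw [Fintype.sum_prod_type]
  rw [hq]
  have e1 : (∑ k, ∑ l, ρ11 (i, j) (k, l) * x (k, l))
      = (∑ k, (if k = i then 0 else if k = j then 0
          else ∑ l, ρ11 (i, j) (k, l) * x (k, l)))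
        + (∑ l, ρ11 (i, j) (i, l) * x (i, l))
        + (∑ l, ρ11 (i, j) (j, l) * x (j, l)) := by
    rw [sum_mask2 hij]; ring
  have hmask : (∑ k, (if k = i then 0 else if k = j then 0
        else ∑ l, ρ11 (i, j) (k, l) * x (k, l)))
      = ∑ k, (if k = i then 0 else if k = j then 0
        else B3 * (x (k, i) + x (k, j))
          + B1 * ((∑ l, x (k, l)) - x (k, i) - x (k, j) - x (k, k))) := by
    refine Finset.sum_congr rfl fun k _ => ?_
    split_ifs with h1 h2
    · rfl
    · rfl
    · exact hG k h1 h2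
  rw [e1, hmask, sum_mask2 hij, hFi, hFj]
  ring

/-- If the site-symmetric matrix `ρ₁₁` (parameters `C₂, B₃, B₁`) is positive
semidefinite, then its eigenvalues `λ₁ = 2C₂ + 4(d-2)B₃ + (d-2)(d-3)B₁` and
`λ₂ = 2C₂ + 2(d-4)B₃ − 2(d-3)B₁` are nonnegative; consequently, if `B₃ ≥ 0`
then `−2C₂/((d-2)(d-3)) − 4B₃/(d-3) ≤ B₁ ≤ C₂/(d-3) + ((d-4)/(d-3))B₃`. -/
theorem rho11_psd_eigenvalue_bounds (d : ℕ) (hd : 5 ≤ d) (C2 B3 B1 : ℝ)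
    (ρ11 : Matrix (Fin d × Fin d) (Fin d × Fin d) ℝ)
    (hρ : ∀ i j k l : Fin d, ρ11 (i, j) (k, l) =
      if i = j ∨ k = l then 0
      else if (k, l) = (i, j) ∨ (k, l) = (j, i) then C2
      else if i = k ∨ i = l ∨ j = k ∨ j = l then B3
      else B1)
    (hpsd : ρ11.PosSemidef) :
    0 ≤ 2 * C2 + 4 * ((d : ℝ) - 2) * B3 + ((d : ℝ) - 2) * ((d : ℝ) - 3) * B1 ∧
    0 ≤ 2 * C2 + 2 * ((d : ℝ) - 4) * B3 - 2 * ((d : ℝ) - 3) * B1 ∧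
    (0 ≤ B3 →
      -(2 * C2 / (((d : ℝ) - 2) * ((d : ℝ) - 3))) - 4 * B3 / ((d : ℝ) - 3) ≤ B1 ∧
      B1 ≤ C2 / ((d : ℝ) - 3) + (((d : ℝ) - 4) / ((d : ℝ) - 3)) * B3) := by
  have hd5 : (5:ℝ) ≤ (d:ℝ) := by exact_mod_cast hd
  -- quadratic form nonnegativity
  have hq : ∀ x : Fin d × Fin d → ℝ,
      0 ≤ ∑ i : Fin d, ∑ j : Fin d, x (i, j) * ∑ q : Fin d × Fin d, ρ11 (i, j) q * x q := by
    intro x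
    have h := hpsd.dotProduct_mulVec_nonneg x
    simpa [dotProduct, Matrix.mulVec, Fintype.sum_prod_type] using h
  -- diagonal rows vanish
  have hdiagrow : ∀ (x : Fin d × Fin d → ℝ) (i : Fin d),
      (∑ q : Fin d × Fin d, ρ11 (i, i) q * x q) = 0 := by
    intro x i
    refine Finset.sum_eq_zero fun q _ => ?_
    have h : ρ11 (i, i) q = 0 := by simpa using hρ i i q.1 q.2
    rw [h, zero_mul]
  -- abbreviations for the eigenvalues
  set L1 : ℝ := 2 * C2 + 4 * ((d : ℝ) - 2) * B3 + ((d : ℝ) - 2) * ((d : ℝ) - 3) * B1 with hL1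
  set L2 : ℝ := 2 * C2 + 2 * ((d : ℝ) - 4) * B3 - 2 * ((d : ℝ) - 3) * B1 with hL2
  ---- Part 1: the all-ones (off-diagonal) vector
  have hL1nonneg : 0 ≤ L1 := by
    set x1 : Fin d × Fin d → ℝ := fun p => if p.1 = p.2 then 0 else 1 with hx1
    have hx1app : ∀ a b : Fin d, x1 (a, b) = if a = b then 0 else 1 := fun a b => rfl
    have hx1row : ∀ a : Fin d, (∑ l, x1 (a, l)) = (d:ℝ) - 1 := by
      intro a
      have h : ∀ l : Fin d, x1 (a, l) = 1 - (if l = a then 1 else 0) := by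
        intro l; rw [hx1app]; by_cases h1 : l = a
        · subst h1; simp
        · simp [h1, Ne.symm h1]
      rw [Finset.sum_congr rfl fun l _ => h l, Finset.sum_sub_distrib]
      simp [Finset.sum_ite_eq']
    have hx1col : ∀ a : Fin d, (∑ k, x1 (k, a)) = (d:ℝ) - 1 := by
      intro a
      have h : ∀ k : Fin d, x1 (k, a) = 1 - (if k = a then 1 else 0) := by
        intro k; rw [hx1app]; by_cases h1 : k = a <;> simp [h1]
      rw [Finset.sum_congr rfl fun k _ => h k, Finset.sum_sub_distrib]
      simp [Finset.sum_ite_eq']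
    have hrv1 : ∀ i j : Fin d, i ≠ j → (∑ q : Fin d × Fin d, ρ11 (i, j) q * x1 q) = L1 := by
      intro i j hij
      rw [row_eq C2 B3 B1 ρ11 hρ x1 i j hij]
      have hGsum : (∑ k, (B3 * (x1 (k, i) + x1 (k, j))
            + B1 * ((∑ l, x1 (k, l)) - x1 (k, i) - x1 (k, j) - x1 (k, k))))
          = (B3 - B1) * (((d:ℝ) - 1) + ((d:ℝ) - 1)) + (d:ℝ) * (B1 * ((d:ℝ) - 1)) := by
        have h : ∀ k : Fin d, (B3 * (x1 (k, i) + x1 (k, j))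
              + B1 * ((∑ l, x1 (k, l)) - x1 (k, i) - x1 (k, j) - x1 (k, k)))
            = (B3 - B1) * x1 (k, i) + (B3 - B1) * x1 (k, j) + B1 * ((d:ℝ) - 1) := by
          intro k
          rw [hx1row k]
          have hkk : x1 (k, k) = 0 := by rw [hx1app]; simp
          rw [hkk]; ring
        rw [Finset.sum_congr rfl fun k _ => h k, Finset.sum_add_distrib,
          Finset.sum_add_distrib, ← Finset.mul_sum, ← Finset.mul_sum, hx1col i, hx1col j]
        simp [Finset.sum_const, Finset.card_univ]
        ring
      rw [hGsum, hx1row i, hx1row j]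
      simp only [hx1app, if_neg hij, if_neg hij.symm, eq_self_iff_true, if_true, hL1]
      ring
    have hsum : (∑ i : Fin d, ∑ j : Fin d, x1 (i, j) * ∑ q : Fin d × Fin d, ρ11 (i, j) q * x1 q)
        = (d:ℝ) * (((d:ℝ) - 1) * L1) := by
      have hinner : ∀ i : Fin d, (∑ j, x1 (i, j) * ∑ q : Fin d × Fin d, ρ11 (i, j) q * x1 q)
          = ((d:ℝ) - 1) * L1 := by
        intro i
        have h : ∀ j : Fin d, x1 (i, j) * (∑ q : Fin d × Fin d, ρ11 (i, j) q * x1 q)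
            = if i = j then 0 else L1 := by
          intro j
          by_cases hij : i = j
          · subst hij; rw [hdiagrow x1 i, mul_zero, if_pos rfl]
          · rw [hrv1 i j hij, hx1app, if_neg hij, if_neg hij, one_mul]
        rw [Finset.sum_congr rfl fun j _ => h j, sum_mask1' i fun _ => L1]
        simp [Finset.sum_const, Finset.card_univ]
        ring
      rw [Finset.sum_congr rfl fun i _ => hinner i]
      simp [Finset.sum_const, Finset.card_univ]
    have h := hq x1
    rw [hsum] at h
    have hdpos : (0:ℝ) < (d:ℝ) * ((d:ℝ) - 1) := by nlinarith
    nlinarith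
  ---- Part 2: the vector x₂(i,j) = w i + w j with w = e_a - e_b
  have hL2nonneg : 0 ≤ L2 := by
    set a : Fin d := ⟨0, by omega⟩ with ha
    set b : Fin d := ⟨1, by omega⟩ with hb
    have hab : a ≠ b := by simp [ha, hb, Fin.ext_iff]
    set w : Fin d → ℝ := fun k => (if k = a then 1 else 0) - (if k = b then 1 else 0) with hw
    have hwapp : ∀ k : Fin d, w k = (if k = a then 1 else 0) - (if k = b then 1 else 0) :=
      fun k => rfl
    have hw0 : ∑ k, w k = 0 := by
      rw [Finset.sum_congr rfl fun k _ => hwapp k, Finset.sum_sub_distrib]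
      simp [Finset.sum_ite_eq']
    have hwsq : ∑ k, w k * w k = 2 := by
      have h : ∀ k : Fin d, w k * w k = (if k = a then (1:ℝ) else 0) + (if k = b then 1 else 0) := by
        intro k
        rw [hwapp]
        by_cases h1 : k = a
        · subst h1; simp [hab]
        · by_cases h2 : k = b <;> simp [h1, h2, Ne.symm hab]
      rw [Finset.sum_congr rfl fun k _ => h k, Finset.sum_add_distrib]
      simp [Finset.sum_ite_eq']
      norm_num
    set x2 : Fin d × Fin d → ℝ := fun p => w p.1 + w p.2 with hx2
    have hx2app : ∀ c e : Fin d, x2 (c, e) = w c + w e := fun c e => rfl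
    have hx2row : ∀ c : Fin d, (∑ l, x2 (c, l)) = (d:ℝ) * w c := by
      intro c
      rw [Finset.sum_congr rfl fun l _ => hx2app c l, Finset.sum_add_distrib, hw0,
        Finset.sum_const]
      simp [Finset.card_univ]
    have hrv2 : ∀ i j : Fin d, i ≠ j →
        (∑ q : Fin d × Fin d, ρ11 (i, j) q * x2 q) = L2 * (w i + w j) := by
      intro i j hij
      rw [row_eq C2 B3 B1 ρ11 hρ x2 i j hij]
      have hGsum2 : (∑ k, (B3 * (x2 (k, i) + x2 (k, j))
            + B1 * ((∑ l, x2 (k, l)) - x2 (k, i) - x2 (k, j) - x2 (k, k))))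
          = (d:ℝ) * ((B3 - B1) * (w i + w j)) := by
        have h : ∀ k : Fin d, (B3 * (x2 (k, i) + x2 (k, j))
              + B1 * ((∑ l, x2 (k, l)) - x2 (k, i) - x2 (k, j) - x2 (k, k)))
            = (2 * B3 + ((d:ℝ) - 4) * B1) * w k + (B3 - B1) * (w i + w j) := by
          intro k
          rw [hx2row k]
          simp only [hx2app]
          ring
        rw [Finset.sum_congr rfl fun k _ => h k, Finset.sum_add_distrib, ← Finset.mul_sum,
          hw0, Finset.sum_const]
        simp [Finset.card_univ]
      rw [hGsum2, hx2row i, hx2row j]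
      simp only [hx2app, hL2]
      ring
    have hsq : ∀ i : Fin d, (∑ j, (w i + w j) * (w i + w j)) = (d:ℝ) * (w i * w i) + 2 := by
      intro i
      have h : ∀ j : Fin d, (w i + w j) * (w i + w j)
          = (2 * w i) * w j + (w i * w i + w j * w j) := by intro j; ring
      rw [Finset.sum_congr rfl fun j _ => h j, Finset.sum_add_distrib, ← Finset.mul_sum,
        hw0, Finset.sum_add_distrib, hwsq, Finset.sum_const]
      simp [Finset.card_univ]
    have hinner2 : ∀ i : Fin d,
        (∑ j, x2 (i, j) * ∑ q : Fin d × Fin d, ρ11 (i, j) q * x2 q)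
          = (L2 * (d:ℝ) - 4 * L2) * (w i * w i) + 2 * L2 := by
      intro i
      have h : ∀ j : Fin d, x2 (i, j) * (∑ q : Fin d × Fin d, ρ11 (i, j) q * x2 q)
          = if i = j then 0 else L2 * ((w i + w j) * (w i + w j)) := by
        intro j
        by_cases hij : i = j
        · subst hij; rw [hdiagrow x2 i, mul_zero, if_pos rfl]
        · rw [hrv2 i j hij, if_neg hij, hx2app]; ring
      rw [Finset.sum_congr rfl fun j _ => h j,
        sum_mask1' i fun j => L2 * ((w i + w j) * (w i + w j)), ← Finset.mul_sum, hsq i]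
      ring
    have hQ2 : (∑ i : Fin d, ∑ j : Fin d, x2 (i, j) * ∑ q : Fin d × Fin d, ρ11 (i, j) q * x2 q)
        = L2 * (4 * (d:ℝ) - 8) := by
      rw [Finset.sum_congr rfl fun i _ => hinner2 i, Finset.sum_add_distrib, ← Finset.mul_sum,
        hwsq, Finset.sum_const]
      simp [Finset.card_univ]
      ring
    have h := hq x2
    rw [hQ2] at h
    have hpos : (0:ℝ) < 4 * (d:ℝ) - 8 := by linarith
    nlinarith
  ---- conclusion
  refine ⟨hL1nonneg, hL2nonneg, fun hB3 => ?_⟩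
  have h2 : (0:ℝ) < (d:ℝ) - 2 := by linarith
  have h3 : (0:ℝ) < (d:ℝ) - 3 := by linarith
  have h2' : ((d:ℝ) - 2) ≠ 0 := ne_of_gt h2
  have h3' : ((d:ℝ) - 3) ≠ 0 := ne_of_gt h3
  have hL1' : 0 ≤ 2 * C2 + 4 * ((d:ℝ) - 2) * B3 + ((d:ℝ) - 2) * ((d:ℝ) - 3) * B1 := by
    rw [← hL1]; exact hL1nonneg
  have hL2' : 0 ≤ 2 * C2 + 2 * ((d:ℝ) - 4) * B3 - 2 * ((d:ℝ) - 3) * B1 := by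
    rw [← hL2]; exact hL2nonneg
  constructor
  · have e : -(2 * C2 / (((d:ℝ) - 2) * ((d:ℝ) - 3))) - 4 * B3 / ((d:ℝ) - 3)
        = (-(2 * C2) - 4 * ((d:ℝ) - 2) * B3) / (((d:ℝ) - 2) * ((d:ℝ) - 3)) := by
      field_simp
    rw [e, div_le_iff₀ (by positivity)]
    nlinarith
  · have e : C2 / ((d:ℝ) - 3) + (((d:ℝ) - 4) / ((d:ℝ) - 3)) * B3
        = (C2 + ((d:ℝ) - 4) * B3) / ((d:ℝ) - 3) := by
      field_simp
    rw [e, le_div_iff₀ h3]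
    nlinarith
end
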